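/- arXiv:1812.09986 — 4 statements merged into one kernel-verified Lean document; each statement's English description precedes it below -/
import Mathlib

section
/- Let N be a 4-dimensional nil evolution algebra over a field F of characteristic ≠ 2 which is associative and indecomposable. Then N admits a natural basis (v_1, v_2, v_3, v_4) and there exist α, β ∈ F, α ≠ 0, β ≠ 0, such that v_1·v_1 = v_4, v_2·v_2 = α·v_4, v_3·v_3 = β·v_4, v_4·v_4 = 0 (the algebra N_{4,5}(α,β)). -/
/-- Principal powers: `ppow m a k = a^(k+1)`. -/
def ppow {F A : Type*} [Field F] [AddCommGroup A] [Module F A]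
    (m : A →ₗ[F] A →ₗ[F] A) (a : A) : ℕ → A
  | 0 => a
  | k + 1 => m (ppow m a k) a

open Submodule

section
variable {F A : Type*} [Field F] [AddCommGroup A] [Module F A]

variable {F A : Type*} [Field F] [AddCommGroup A] [Module F A]

lemma span_isCompl (b : Module.Basis (Fin 4) F A) (s : Set (Fin 4)) :
    IsCompl (span F (b '' s)) (span F (b '' sᶜ)) := by
  constructor
  · exact b.linearIndependent.disjoint_span_image disjoint_compl_right
  · rw [codisjoint_iff, ← span_union, ← Set.image_union, Set.union_compl_self, Set.image_univ,
      b.span_eq]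

lemma mul_basis (m : A →ₗ[F] A →ₗ[F] A) (e : Module.Basis (Fin 4) F A)
    (hnat : ∀ i j : Fin 4, i ≠ j → m (e i) (e j) = 0) (x : A) (j : Fin 4) :
    m x (e j) = e.repr x j • m (e j) (e j) := by
  conv_lhs => rw [← e.sum_repr x]
  rw [map_sum, LinearMap.sum_apply]
  rw [Finset.sum_eq_single j
    (fun i _ hi => by rw [map_smul, LinearMap.smul_apply, hnat i j hi, smul_zero])
    (by simp)]
  rw [map_smul, LinearMap.smul_apply]

lemma prod_formula (m : A →ₗ[F] A →ₗ[F] A) (e : Module.Basis (Fin 4) F A)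
    (hnat : ∀ i j : Fin 4, i ≠ j → m (e i) (e j) = 0) (x y : A) :
    m x y = ∑ i : Fin 4, (e.repr x i * e.repr y i) • m (e i) (e i) := by
  conv_lhs => rw [← e.sum_repr y]
  rw [map_sum]
  refine Finset.sum_congr rfl fun i _ => ?_
  rw [map_smul, mul_basis m e hnat x i, smul_smul, mul_comm]


lemma ppow_basis (m : A →ₗ[F] A →ₗ[F] A) (e : Module.Basis (Fin 4) F A)
    (hnat : ∀ i j : Fin 4, i ≠ j → m (e i) (e j) = 0) (j : Fin 4) (n : ℕ) :
    ppow m (e j) (n + 1) = (e.repr (m (e j) (e j)) j) ^ n • m (e j) (e j) := by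
  induction n with
  | zero => simp [ppow]
  | succ n ih =>
      show m (ppow m (e j) (n+1)) (e j) = _
      rw [ih, map_smul, LinearMap.smul_apply, mul_basis m e hnat (m (e j) (e j)) j,
        smul_smul, ← pow_succ]

lemma key_lemma (m : A →ₗ[F] A →ₗ[F] A) (e : Module.Basis (Fin 4) F A)
    (hnat : ∀ i j : Fin 4, i ≠ j → m (e i) (e j) = 0)
    (hnil : ∀ a : A, ∃ k, ppow m a k = 0)
    (hassoc : ∀ x y z : A, m (m x y) z = m x (m y z)) :
    ∀ i j : Fin 4, m (e j) (e j) ≠ 0 → e.repr (m (e i) (e i)) j = 0 := by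
  intro i j hj
  rcases eq_or_ne i j with rfl | hij
  · obtain ⟨k, hk⟩ := hnil (e i)
    cases k with
    | zero => exact absurd hk (e.ne_zero i)
    | succ n =>
        rw [ppow_basis m e hnat i n] at hk
        rcases smul_eq_zero.mp hk with h | h
        · exact (pow_eq_zero_iff'.mp h).1
        · exact absurd h hj
  · have h := hassoc (e i) (e i) (e j)
    rw [hnat i j hij, map_zero, mul_basis m e hnat] at h
    exact (smul_eq_zero.mp h).resolve_right hj

end

/-- a 4-dimensional nil, associative, indecomposable evolution algebra over
a field of characteristic ≠ 2 is isomorphic to `N_{4,5}(α,β)`: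
`v₁² = v₄`, `v₂² = α v₄`, `v₃² = β v₄`, `v₄² = 0` with `α, β ≠ 0`. -/
theorem nil_assoc_indecomposable_dim4_classification
    (F : Type*) [Field F] (h2 : (2 : F) ≠ 0)
    (A : Type*) [AddCommGroup A] [Module F A]
    (m : A →ₗ[F] A →ₗ[F] A) (hcomm : ∀ x y : A, m x y = m y x)
    (e : Module.Basis (Fin 4) F A)
    (hnat : ∀ i j : Fin 4, i ≠ j → m (e i) (e j) = 0)
    (hnil : ∀ a : A, ∃ k : ℕ, ppow m a k = 0)
    (hassoc : ∀ x y z : A, m (m x y) z = m x (m y z))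
    (hindec : ¬ ∃ I J : Submodule F A,
      (∀ x ∈ I, ∀ y : A, m x y ∈ I) ∧ (∀ x ∈ J, ∀ y : A, m x y ∈ J) ∧
      I ≠ ⊥ ∧ J ≠ ⊥ ∧ IsCompl I J) :
    ∃ v : Module.Basis (Fin 4) F A,
      (∀ i j : Fin 4, i ≠ j → m (v i) (v j) = 0) ∧
      ∃ α β : F, α ≠ 0 ∧ β ≠ 0 ∧
        m (v 0) (v 0) = v 3 ∧
        m (v 1) (v 1) = α • v 3 ∧
        m (v 2) (v 2) = β • v 3 ∧
        m (v 3) (v 3) = 0 := by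
  classical
  have hmul : ∀ x y : A, m x y = ∑ i : Fin 4, (e.repr x i * e.repr y i) • m (e i) (e i) :=
    prod_formula m e hnat
  have key : ∀ i j : Fin 4, m (e j) (e j) ≠ 0 → e.repr (m (e i) (e i)) j = 0 :=
    key_lemma m e hnat hnil hassoc
  obtain ⟨z, hz⟩ : ∃ z, m (e z) (e z) = 0 := by
    by_contra h
    push_neg at h
    exact h 0 (e.repr.map_eq_zero_iff.mp (Finsupp.ext fun j => key 0 j (h j)))
  by_cases hall : ∀ i : Fin 4, m (e i) (e i) = 0
  · exfalso; apply hindec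
    have hm0 : ∀ x y : A, m x y = 0 := fun x y => by
      rw [hmul]; exact Finset.sum_eq_zero fun i _ => by rw [hall i, smul_zero]
    refine ⟨span F (e '' {0}), span F (e '' ({0}ᶜ)),
      fun x _ y => by rw [hm0]; exact zero_mem _,
      fun x _ y => by rw [hm0]; exact zero_mem _, ?_, ?_, span_isCompl e {0}⟩
    · intro h
      exact e.ne_zero 0 ((mem_bot F).mp (h ▸ subset_span ⟨0, rfl, rfl⟩))
    · intro h
      refine e.ne_zero 1 ((mem_bot F).mp (h ▸ subset_span ⟨1, by simp, rfl⟩))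
  push_neg at hall
  obtain ⟨i0, hi0⟩ := hall
  by_cases huniq : ∀ j : Fin 4, m (e j) (e j) = 0 → j = z
  · -- GOOD CASE: unique zero-square index z
    have hrepr0 : ∀ i : Fin 4, ∀ j, j ≠ z → e.repr (m (e i) (e i)) j = 0 :=
      fun i j hj => key i j (fun hsq => hj (huniq j hsq))
    have hrep : ∀ i : Fin 4, m (e i) (e i) = (e.repr (m (e i) (e i)) z) • e z := by
      intro i
      apply e.repr.injective
      ext j
      rcases eq_or_ne j z with rfl | hj
      · simp [e.repr_self_apply]
      · rw [hrepr0 i j hj]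
        simp [e.repr_self_apply, Ne.symm hj]
    have hcne : ∀ i : Fin 4, i ≠ z → e.repr (m (e i) (e i)) z ≠ 0 := by
      intro i hiz h0
      exact hiz (huniq i (by rw [hrep i, h0, zero_smul]))
    set s : Equiv.Perm (Fin 4) := Equiv.swap z 3 with hsdef
    have hs : ∀ i : Fin 4, (e.reindex s) i = e (s i) := fun i => by
      rw [Module.Basis.reindex_apply, hsdef, Equiv.symm_swap]
    have hs3 : s 3 = z := Equiv.swap_apply_right z 3
    have hsne : ∀ i : Fin 4, i ≠ 3 → s i ≠ z := fun i hi h =>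
      hi (s.injective (by rw [h, ← hs3]))
    set c : Fin 4 → F := fun i => e.repr (m (e i) (e i)) z with hcdef
    have hc0 : c (s 0) ≠ 0 := hcne (s 0) (hsne 0 (by decide))
    have hc1 : c (s 1) ≠ 0 := hcne (s 1) (hsne 1 (by decide))
    have hc2 : c (s 2) ≠ 0 := hcne (s 2) (hsne 2 (by decide))
    set u : Fin 4 → Fˣ := fun i => if i = 3 then Units.mk0 (c (s 0)) hc0 else 1 with hudef
    set v : Module.Basis (Fin 4) F A := (e.reindex s).unitsSMul u with hvdef
    have hv : ∀ i : Fin 4, v i = (u i : F) • e (s i) := fun i => by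
      rw [hvdef, Module.Basis.unitsSMul_apply, hs, Units.smul_def]
    have hv0 : v 0 = e (s 0) := by rw [hv]; simp [hudef]
    have hv1 : v 1 = e (s 1) := by rw [hv]; simp [hudef]
    have hv2 : v 2 = e (s 2) := by rw [hv]; simp [hudef]
    have hv3 : v 3 = c (s 0) • e z := by rw [hv, hs3]; simp [hudef]
    refine ⟨v, ?_, c (s 1) / c (s 0), c (s 2) / c (s 0),
      div_ne_zero hc1 hc0, div_ne_zero hc2 hc0, ?_, ?_, ?_, ?_⟩
    · intro i j hij
      simp only [hv, map_smul, LinearMap.smul_apply,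
        hnat (s i) (s j) (fun h => hij (s.injective h)), smul_zero]
    · rw [hv0, hv3, hrep (s 0)]
    · rw [hv1, hv3, hrep (s 1), smul_smul, div_mul_cancel₀ _ hc0]
    · rw [hv2, hv3, hrep (s 2), smul_smul, div_mul_cancel₀ _ hc0]
    · simp only [hv3, map_smul, LinearMap.smul_apply, hz, smul_zero]
  · push_neg at huniq
    obtain ⟨z2, hz2, hz2ne⟩ := huniq
    exfalso; apply hindec
    set Wd : Set (Fin 4) := {i | m (e i) (e i) = 0} with hWd
    set W := span F (e '' Wd) with hWdef
    set U := span F (e '' Wdᶜ) with hUdef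
    set V := span F (Set.range fun i => m (e i) (e i)) with hVdef
    have hUW : IsCompl U W := by
      have h := span_isCompl e Wdᶜ
      rwa [compl_compl] at h
    have hVleW : V ≤ W := by
      rw [hVdef, span_le]
      rintro _ ⟨i, rfl⟩
      rw [SetLike.mem_coe, Module.Basis.mem_span_image]
      intro j hjs
      by_contra hj
      exact (Finsupp.mem_support_iff.mp hjs) (key i j hj)
    have hmulV : ∀ x y : A, m x y ∈ V := fun x y => by
      rw [hmul]; exact sum_mem fun i _ => smul_mem _ _ (subset_span ⟨i, rfl⟩)
    have hWmul : ∀ x ∈ W, ∀ y : A, m x y = 0 := by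
      intro x hx y
      rw [hmul]
      refine Finset.sum_eq_zero fun i _ => ?_
      by_cases h : m (e i) (e i) = 0
      · rw [h, smul_zero]
      · have hxi : e.repr x i = 0 := by
          by_contra hne
          exact h (e.mem_span_image.mp hx (Finsupp.mem_support_iff.mpr hne))
        rw [hxi, zero_mul, zero_smul]
    by_cases hVWeq : V = W
    · -- V = W : two independent squares, explicit decomposition
      have heznotsp : ∀ w : A, ¬ (V ≤ span F {w}) := by
        intro w hw
        have h1 : e z ∈ span F {w} := hw (hVWeq.ge (subset_span ⟨z, hz, rfl⟩))
        have h2 : e z2 ∈ span F {w} := hw (hVWeq.ge (subset_span ⟨z2, hz2, rfl⟩))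
        obtain ⟨p, hp⟩ := mem_span_singleton.mp h1
        obtain ⟨q, hq⟩ := mem_span_singleton.mp h2
        have hqz : q • e z = p • e z2 := by rw [← hp, ← hq, smul_smul, smul_smul, mul_comm]
        have hq0 : q = 0 := by
          have h3 := congrArg (fun x => e.repr x z) hqz
          simpa [e.repr_self_apply, hz2ne] using h3
        exact e.ne_zero z2 (by rw [← hq, hq0, zero_smul])
      obtain ⟨i1, hi1, hi1ne⟩ : ∃ i1, m (e i1) (e i1) ≠ 0 ∧ i1 ≠ i0 := by
        by_contra h
        push_neg at h
        apply heznotsp (m (e i0) (e i0))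
        rw [hVdef, span_le]
        rintro _ ⟨i, rfl⟩
        rw [SetLike.mem_coe]
        show m (e i) (e i) ∈ _
        by_cases hzi : m (e i) (e i) = 0
        · rw [hzi]; exact zero_mem _
        · rw [h i hzi]; exact mem_span_singleton_self _
      have n0z : i0 ≠ z := fun h => hi0 (by rw [h]; exact hz)
      have n0z2 : i0 ≠ z2 := fun h => hi0 (by rw [h]; exact hz2)
      have n1z : i1 ≠ z := fun h => hi1 (by rw [h]; exact hz)
      have n1z2 : i1 ≠ z2 := fun h => hi1 (by rw [h]; exact hz2)
      have cover : ∀ j : Fin 4, j = i0 ∨ j = i1 ∨ j = z ∨ j = z2 := by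
        intro j
        by_contra hcon
        push_neg at hcon
        obtain ⟨c1, c2, c3, c4⟩ := hcon
        have hcard : ({j, i0, i1, z, z2} : Finset (Fin 4)).card = 5 := by
          rw [Finset.card_insert_of_notMem (by simp [c1, c2, c3, c4]),
            Finset.card_insert_of_notMem (by simp [Ne.symm hi1ne, n0z, n0z2]),
            Finset.card_insert_of_notMem (by simp [n1z, n1z2]),
            Finset.card_insert_of_notMem (by simp [Ne.symm hz2ne]),
            Finset.card_singleton]
        have hle := Finset.card_le_univ ({j, i0, i1, z, z2} : Finset (Fin 4))
        rw [hcard] at hle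
        simp at hle
      have hspan : ∀ w : A, m (e i0) (e i0) ∈ span F {w} →
          m (e i1) (e i1) ∈ span F {w} → False := by
        intro w h0 h1
        apply heznotsp w
        rw [hVdef, span_le]
        rintro _ ⟨i, rfl⟩
        rw [SetLike.mem_coe]
        show m (e i) (e i) ∈ _
        rcases cover i with rfl | rfl | rfl | rfl
        · exact h0
        · exact h1
        · rw [hz]; exact zero_mem _
        · rw [hz2]; exact zero_mem _
      have hind : ∀ p q : F, p • m (e i0) (e i0) + q • m (e i1) (e i1) = 0 →
          p = 0 ∧ q = 0 := by
        intro p q hpq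
        constructor
        · by_contra hp
          refine hspan (m (e i1) (e i1)) ?_ (mem_span_singleton_self _)
          have h1 : p • m (e i0) (e i0) = (-q) • m (e i1) (e i1) := by
            rw [neg_smul]; exact eq_neg_of_add_eq_zero_left hpq
          exact mem_span_singleton.mpr ⟨p⁻¹ * (-q),
            by rw [mul_smul, ← h1, smul_smul, inv_mul_cancel₀ hp, one_smul]⟩
        · by_contra hq
          refine hspan (m (e i0) (e i0)) (mem_span_singleton_self _) ?_
          have h1 : q • m (e i1) (e i1) = (-p) • m (e i0) (e i0) := by
            rw [neg_smul]; exact eq_neg_of_add_eq_zero_right hpq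
          exact mem_span_singleton.mpr ⟨q⁻¹ * (-p),
            by rw [mul_smul, ← h1, smul_smul, inv_mul_cancel₀ hq, one_smul]⟩
      have hideal : ∀ a b : Fin 4, a ≠ b → m (e b) (e b) ≠ 0 →
          (∀ i : Fin 4, i = a ∨ i = b ∨ m (e i) (e i) = 0) →
          ∀ x ∈ span F {e a, m (e a) (e a)}, ∀ y : A,
            m x y ∈ span F {e a, m (e a) (e a)} := by
        intro a b hab hb hcov x hx y
        obtain ⟨p, q, hpq⟩ := mem_span_pair.mp hx
        have hxb : e.repr x b = 0 := by
          rw [← hpq]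
          simp [e.repr_self_apply, key a b hb, hab]
        rw [hmul x y]
        apply Submodule.sum_mem
        intro i _
        rcases hcov i with rfl | rfl | h0
        · exact smul_mem _ _ (subset_span (by simp))
        · rw [hxb, zero_mul, zero_smul]; exact zero_mem _
        · rw [h0, smul_zero]; exact zero_mem _
      have hcov1 : ∀ i : Fin 4, i = i0 ∨ i = i1 ∨ m (e i) (e i) = 0 := fun i => by
        rcases cover i with h | h | rfl | rfl
        · exact Or.inl h
        · exact Or.inr (Or.inl h)
        · exact Or.inr (Or.inr hz)
        · exact Or.inr (Or.inr hz2)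
      have hcov2 : ∀ i : Fin 4, i = i1 ∨ i = i0 ∨ m (e i) (e i) = 0 := fun i => by
        rcases cover i with h | h | rfl | rfl
        · exact Or.inr (Or.inl h)
        · exact Or.inl h
        · exact Or.inr (Or.inr hz)
        · exact Or.inr (Or.inr hz2)
      refine ⟨span F {e i0, m (e i0) (e i0)}, span F {e i1, m (e i1) (e i1)},
        hideal i0 i1 (Ne.symm hi1ne) hi1 hcov1, hideal i1 i0 hi1ne hi0 hcov2, ?_, ?_, ?_⟩
      · intro h
        exact e.ne_zero i0 ((mem_bot F).mp (h ▸ subset_span (by simp)))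
      · intro h
        exact e.ne_zero i1 ((mem_bot F).mp (h ▸ subset_span (by simp)))
      · constructor
        · rw [Submodule.disjoint_def]
          intro x hxI hxJ
          obtain ⟨a, b, hab⟩ := mem_span_pair.mp hxI
          obtain ⟨cc, d, hcd⟩ := mem_span_pair.mp hxJ
          have h0 : e.repr x i0 = 0 := by
            rw [← hcd]
            simp [e.repr_self_apply, key i1 i0 hi0, hi1ne]
          have h1 : e.repr x i1 = 0 := by
            rw [← hab]
            simp [e.repr_self_apply, key i0 i1 hi1, Ne.symm hi1ne]
          have ha : a = 0 := by
            have h2 := congrArg (fun y => e.repr y i0) hab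
            simpa [e.repr_self_apply, key i0 i0 hi0, Ne.symm hi1ne, h0] using h2
          have hcc : cc = 0 := by
            have h2 := congrArg (fun y => e.repr y i1) hcd
            simpa [e.repr_self_apply, key i1 i1 hi1, hi1ne, h1] using h2
          have hx0 : b • m (e i0) (e i0) = x := by rw [← hab, ha, zero_smul, zero_add]
          have hx1 : d • m (e i1) (e i1) = x := by rw [← hcd, hcc, zero_smul, zero_add]
          have hsum : b • m (e i0) (e i0) + (-d) • m (e i1) (e i1) = 0 := by
            rw [neg_smul, hx0, hx1, add_neg_cancel]
          obtain ⟨hb, _⟩ := hind b (-d) hsum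
          rw [← hx0, hb, zero_smul]
        · rw [codisjoint_iff, eq_top_iff, ← e.span_eq, span_le]
          have hVle : V ≤ span F {e i0, m (e i0) (e i0)} ⊔
              span F {e i1, m (e i1) (e i1)} := by
            rw [hVdef, span_le]
            rintro _ ⟨i, rfl⟩
            rw [SetLike.mem_coe]
            show m (e i) (e i) ∈ _
            rcases cover i with rfl | rfl | rfl | rfl
            · exact Submodule.mem_sup_left (subset_span (by simp))
            · exact Submodule.mem_sup_right (subset_span (by simp))
            · rw [hz]; exact zero_mem _
            · rw [hz2]; exact zero_mem _
          rintro _ ⟨j, rfl⟩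
          rw [SetLike.mem_coe]
          rcases cover j with rfl | rfl | rfl | rfl
          · exact Submodule.mem_sup_left (subset_span (by simp))
          · exact Submodule.mem_sup_right (subset_span (by simp))
          · exact hVle (hVWeq.ge (subset_span ⟨j, hz, rfl⟩))
          · exact hVle (hVWeq.ge (subset_span ⟨j, hz2, rfl⟩))
    · obtain ⟨J, hJ⟩ := Submodule.exists_isCompl (V.comap W.subtype)
      set J' := J.map W.subtype with hJ'def
      have hJ'W : J' ≤ W := Submodule.map_subtype_le _ _
      have hmapV : (V.comap W.subtype).map W.subtype = V := by
        rw [Submodule.map_comap_subtype, inf_eq_right.mpr hVleW]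
      have hsupVJ : V ⊔ J' = W := by
        have h := congrArg (Submodule.map W.subtype) (codisjoint_iff.mp hJ.codisjoint)
        rwa [Submodule.map_sup, hmapV, Submodule.map_top, Submodule.range_subtype] at h
      have hdisVJ : Disjoint V J' := by
        rw [disjoint_iff]
        have h := congrArg (Submodule.map W.subtype) (disjoint_iff.mp hJ.disjoint)
        rwa [Submodule.map_inf W.subtype (Submodule.injective_subtype W), hmapV,
          Submodule.map_bot] at h
      refine ⟨U ⊔ V, J', fun x _ y => Submodule.mem_sup_right (hmulV x y),
        fun x hx y => by rw [hWmul x (hJ'W hx) y]; exact zero_mem _, ?_, ?_, ?_⟩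
      · intro h
        have hm : e i0 ∈ (⊥ : Submodule F A) :=
          h ▸ Submodule.mem_sup_left (show e i0 ∈ U from subset_span ⟨i0, hi0, rfl⟩)
        exact e.ne_zero i0 ((mem_bot F).mp hm)
      · intro h
        exact hVWeq (by rw [← hsupVJ, h, sup_bot_eq])
      · constructor
        · have hle : (U ⊔ V) ⊓ J' ≤ V := by
            calc (U ⊔ V) ⊓ J' ≤ (V ⊔ U) ⊓ W := inf_le_inf (le_of_eq (sup_comm U V)) hJ'W
              _ = V ⊔ (U ⊓ W) := sup_inf_assoc_of_le U hVleW
              _ = V := by rw [hUW.disjoint.eq_bot, sup_bot_eq]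
          exact disjoint_iff_inf_le.mpr (le_trans (le_inf hle inf_le_right) hdisVJ.le_bot)
        · exact codisjoint_iff.mpr (by rw [sup_assoc, hsupVJ, codisjoint_iff.mp hUW.codisjoint])
end

section
/- Let N be a 4-dimensional nil power-associative evolution algebra over a field F of characteristic ≠ 2 which is indecomposable and not associative. Then N admits a natural basis (v_1, v_2, v_3, v_4) with v_1·v_1 = v_2 + v_3, v_2·v_2 = v_4, v_3·v_3 = −v_4, v_4·v_4 = 0 (the algebra N_{4,6}). -/
namespace EvolAux

variable {F A : Type*} [Field F] [AddCommGroup A] [Module F A]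

noncomputable def Ee (m : A →ₗ[F] A →ₗ[F] A) (e : Module.Basis (Fin 4) F A) (i : Fin 4) : A := m (e i) (e i)

noncomputable def sc (m : A →ₗ[F] A →ₗ[F] A) (e : Module.Basis (Fin 4) F A) (i j : Fin 4) : F :=
  e.repr (Ee m e i) j

lemma expand (e : Module.Basis (Fin 4) F A) (a : A) :
    a = e.repr a 0 • e 0 + e.repr a 1 • e 1 + e.repr a 2 • e 2 + e.repr a 3 • e 3 := by
  have h := e.sum_repr a
  rw [Fin.sum_univ_four] at h
  exact h.symm

lemma inj4 {α : Type*} {u v z w : α} (huv : u ≠ v) (huz : u ≠ z) (huw : u ≠ w)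
    (hvz : v ≠ z) (hvw : v ≠ w) (hzw : z ≠ w) : Function.Injective ![u, v, z, w] := by
  intro a b hab
  fin_cases a <;> fin_cases b <;> simp_all

lemma repr_ne (e : Module.Basis (Fin 4) F A) {p q : Fin 4} (hpq : p ≠ q) : e.repr (e p) q = 0 := by
  rw [Module.Basis.repr_self]
  exact Finsupp.single_eq_of_ne' hpq

variable (m : A →ₗ[F] A →ₗ[F] A) (e : Module.Basis (Fin 4) F A)
variable (hnat : ∀ i j : Fin 4, i ≠ j → m (e i) (e j) = 0)
include hnat

lemma mul_basis (a : A) (j : Fin 4) :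
    m a (e j) = e.repr a j • Ee m e j := by
  conv_lhs => rw [expand e a]
  simp only [map_add, map_smul, LinearMap.add_apply, LinearMap.smul_apply]
  fin_cases j <;>
    simp [Ee, hnat 0 1 (by decide), hnat 0 2 (by decide), hnat 0 3 (by decide),
      hnat 1 0 (by decide), hnat 1 2 (by decide), hnat 1 3 (by decide),
      hnat 2 0 (by decide), hnat 2 1 (by decide), hnat 2 3 (by decide),
      hnat 3 0 (by decide), hnat 3 1 (by decide), hnat 3 2 (by decide)]

lemma mEe (i j : Fin 4) : m (Ee m e i) (e j) = sc m e i j • Ee m e j :=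
  mul_basis m e hnat (Ee m e i) j

lemma mul_expand (a b : A) :
    m a b = ∑ k, (e.repr a k * e.repr b k) • Ee m e k := by
  conv_lhs => rw [expand e b]
  rw [Fin.sum_univ_four]
  simp only [map_add, map_smul, mul_basis m e hnat]
  module

variable (hcomm : ∀ x y : A, m x y = m y x)
variable (hnil : ∀ a : A, ∃ k : ℕ, ppow m a k = 0)
variable (hpa : ∀ (a : A) (i j : ℕ),
      m (ppow m a i) (ppow m a j) = ppow m a (i + j + 1))

/-- powers of a basis vector -/
lemma ppow_basis (i : Fin 4) (n : ℕ) :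
    ppow m (e i) (n + 1) = sc m e i i ^ n • Ee m e i := by
  induction n with
  | zero => simp [ppow, Ee]
  | succ n ih =>
    show m (ppow m (e i) (n+1)) (e i) = _
    rw [ih, map_smul, LinearMap.smul_apply, mEe m e hnat, smul_smul, ← pow_succ]

include hnil in
lemma sc_diag (i : Fin 4) : sc m e i i = 0 := by
  obtain ⟨k, hk⟩ := hnil (e i)
  match k with
  | 0 => exact absurd hk (e.ne_zero i)
  | (n+1) =>
    rw [ppow_basis m e hnat] at hk
    rcases smul_eq_zero.mp hk with h | h
    · match n with
      | 0 => simpa using h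
      | (n+1) =>
        exact pow_eq_zero_iff (Nat.succ_ne_zero n) |>.mp h
    · show e.repr (Ee m e i) i = 0
      rw [h, map_zero]; rfl

include hnil in
lemma mEe_diag (i : Fin 4) : m (Ee m e i) (e i) = 0 := by
  rw [mEe m e hnat, sc_diag m e hnat hnil, zero_smul]

include hnil hpa in
lemma EE_diag (i : Fin 4) : m (Ee m e i) (Ee m e i) = 0 := by
  have h := hpa (e i) 1 1
  have h1 : ppow m (e i) 1 = Ee m e i := by simp [ppow, Ee]
  have h2 : ppow m (e i) 2 = 0 := by
    show m (ppow m (e i) 1) (e i) = 0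
    rw [h1, mEe_diag m e hnat hnil]
  have h3 : ppow m (e i) 3 = 0 := by
    show m (ppow m (e i) 2) (e i) = 0
    rw [h2, map_zero, LinearMap.zero_apply]
  rw [h1, h3] at h
  exact h


omit hnat in
lemma scdef (i j : Fin 4) : e.repr (Ee m e i) j = sc m e i j := rfl

include hcomm hnil hpa in
lemma pair_identity {p q : Fin 4} (hpq : p ≠ q) (x : F) :
    (2*(x*x)) • m (Ee m e p) (Ee m e q) =
      (x * (sc m e p q * sc m e q p)) • Ee m e p
        + ((x*x*x) * (sc m e p q * sc m e q p)) • Ee m e q := by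
  set a := e p + x • e q with ha
  have h1 : ppow m a 1 = Ee m e p + (x*x) • Ee m e q := by
    show m a a = _
    conv_lhs => rw [ha]
    simp only [map_add, map_smul, LinearMap.add_apply, LinearMap.smul_apply,
      mul_basis m e hnat, Finsupp.coe_add, Finsupp.add_apply,
      Finsupp.coe_smul, Finsupp.smul_apply, Module.Basis.repr_self,
      Finsupp.single_eq_same, Finsupp.single_eq_of_ne' hpq,
      Finsupp.single_eq_of_ne' hpq.symm, smul_eq_mul]
    module
  have h2 : ppow m a 2 = ((x*x) * sc m e q p) • Ee m e p + (x * sc m e p q) • Ee m e q := by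
    show m (ppow m a 1) a = _
    rw [h1]
    conv_lhs => rw [ha]
    simp only [map_add, map_smul, LinearMap.add_apply, LinearMap.smul_apply,
      mul_basis m e hnat, Finsupp.coe_add, Finsupp.add_apply,
      Finsupp.coe_smul, Finsupp.smul_apply, scdef m e, sc_diag m e hnat hnil,
      Module.Basis.repr_self, Finsupp.single_eq_same, Finsupp.single_eq_of_ne' hpq,
      Finsupp.single_eq_of_ne' hpq.symm, smul_eq_mul]
    module
  have h3 : ppow m a 3 = (x * (sc m e p q * sc m e q p)) • Ee m e p
        + ((x*x*x) * (sc m e p q * sc m e q p)) • Ee m e q := by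
    show m (ppow m a 2) a = _
    rw [h2]
    conv_lhs => rw [ha]
    simp only [map_add, map_smul, LinearMap.add_apply, LinearMap.smul_apply,
      mul_basis m e hnat, Finsupp.coe_add, Finsupp.add_apply,
      Finsupp.coe_smul, Finsupp.smul_apply, scdef m e, sc_diag m e hnat hnil,
      Module.Basis.repr_self, Finsupp.single_eq_same, Finsupp.single_eq_of_ne' hpq,
      Finsupp.single_eq_of_ne' hpq.symm, smul_eq_mul]
    module
  have h := hpa a 1 1
  rw [h1, h3] at h
  have hL : m (Ee m e p + (x*x) • Ee m e q) (Ee m e p + (x*x) • Ee m e q)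
      = (2*(x*x)) • m (Ee m e p) (Ee m e q) := by
    simp only [map_add, map_smul, LinearMap.add_apply, LinearMap.smul_apply,
      EE_diag m e hnat hnil hpa, hcomm (Ee m e q) (Ee m e p)]
    module
  rw [hL] at h
  exact h

include hcomm hnil hpa in
lemma EE_ne (h2 : (2:F) ≠ 0) {p q : Fin 4} (hpq : p ≠ q) :
    m (Ee m e p) (Ee m e q) = 0 := by
  have hA := pair_identity m e hnat hcomm hnil hpa hpq 1
  have hB := pair_identity m e hnat hcomm hnil hpa hpq (-1)
  have h4 : ((2:F)*(1*1)) • m (Ee m e p) (Ee m e q)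
      + ((2:F)*((-1)*(-1))) • m (Ee m e p) (Ee m e q) = 0 := by
    rw [hA, hB]; module
  have h4' : ((4:F)) • m (Ee m e p) (Ee m e q) = 0 := by
    rw [show ((4:F)) = (2*(1*1)) + (2*((-1)*(-1))) by norm_num, add_smul, h4]
  rcases smul_eq_zero.mp h4' with h | h
  · exact absurd h (by
      intro hc
      apply h2
      have : (4:F) = 2*2 := by norm_num
      rcases mul_eq_zero.mp (this ▸ hc) with h|h <;> exact h)
  · exact h

include hcomm hnil hpa in
lemma sc_cycle2 (h2 : (2:F) ≠ 0) {p q : Fin 4} (hpq : p ≠ q) :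
    sc m e p q * sc m e q p = 0 := by
  have hA := pair_identity m e hnat hcomm hnil hpa hpq 1
  rw [EE_ne m e hnat hcomm hnil hpa h2 hpq, smul_zero] at hA
  have := congrArg (fun t => e.repr t q) hA.symm
  simp only [map_add, map_smul, Finsupp.coe_add, Finsupp.add_apply,
    Finsupp.coe_smul, Finsupp.smul_apply, scdef m e, sc_diag m e hnat hnil,
    map_zero, Finsupp.coe_zero, Pi.zero_apply, smul_eq_mul, one_mul,
    mul_zero, add_zero] at this
  -- this : sc p q * sc q p * sc p q = 0  (roughly)
  by_cases hc : sc m e p q = 0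
  · rw [hc, zero_mul]
  · have h' : sc m e p q * sc m e q p * sc m e p q = 0 := by
      linear_combination this
    rcases mul_eq_zero.mp h' with h | h
    · exact h
    · exact absurd h hc

include hcomm hnil hpa in
lemma triple (h2 : (2:F) ≠ 0) {p q t : Fin 4} (hpq : p ≠ q) (hpt : p ≠ t) (hqt : q ≠ t)
    (hcpq : sc m e p q ≠ 0) (hEq : Ee m e q ≠ 0) : sc m e t p = 0 := by
  have hcqp : sc m e q p = 0 := by
    have := sc_cycle2 m e hnat hcomm hnil hpa h2 hpq
    rcases mul_eq_zero.mp this with h | h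
    · exact absurd h hcpq
    · exact h
  have hgen : ∀ x : F,
      (0:A) = (x * (sc m e p t + sc m e q t) * sc m e t p) • Ee m e p
        + ((x*x) * (sc m e t p * sc m e p q) + x * ((sc m e p t + sc m e q t) * sc m e t q)) • Ee m e q
        + (x * ((x*x) * (sc m e t p * sc m e p t) + (sc m e p q + (x*x) * sc m e t q) * sc m e q t)) • Ee m e t := by
    intro x
    set a := e p + e q + x • e t with ha
    have h1 : ppow m a 1 = Ee m e p + Ee m e q + (x*x) • Ee m e t := by
      show m a a = _
      conv_lhs => rw [ha]
      simp only [map_add, map_smul, LinearMap.add_apply, LinearMap.smul_apply,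
        mul_basis m e hnat, Finsupp.coe_add, Finsupp.add_apply,
        Finsupp.coe_smul, Finsupp.smul_apply, Module.Basis.repr_self,
        Finsupp.single_eq_same, Finsupp.single_eq_of_ne' hpq,
        Finsupp.single_eq_of_ne' hpq.symm, Finsupp.single_eq_of_ne' hpt,
        Finsupp.single_eq_of_ne' hpt.symm, Finsupp.single_eq_of_ne' hqt,
        Finsupp.single_eq_of_ne' hqt.symm, smul_eq_mul]
      module
    have h2' : ppow m a 2 = ((x*x) * sc m e t p) • Ee m e p
        + (sc m e p q + (x*x) * sc m e t q) • Ee m e q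
        + (x * (sc m e p t + sc m e q t)) • Ee m e t := by
      show m (ppow m a 1) a = _
      rw [h1]
      conv_lhs => rw [ha]
      simp only [map_add, map_smul, LinearMap.add_apply, LinearMap.smul_apply,
        mul_basis m e hnat, Finsupp.coe_add, Finsupp.add_apply,
        Finsupp.coe_smul, Finsupp.smul_apply, scdef m e, sc_diag m e hnat hnil, hcqp,
        Module.Basis.repr_self, Finsupp.single_eq_same, Finsupp.single_eq_of_ne' hpq,
        Finsupp.single_eq_of_ne' hpq.symm, Finsupp.single_eq_of_ne' hpt,
        Finsupp.single_eq_of_ne' hpt.symm, Finsupp.single_eq_of_ne' hqt,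
        Finsupp.single_eq_of_ne' hqt.symm, smul_eq_mul]
      module
    have h3 : ppow m a 3 = (x * (sc m e p t + sc m e q t) * sc m e t p) • Ee m e p
        + ((x*x) * (sc m e t p * sc m e p q) + x * ((sc m e p t + sc m e q t) * sc m e t q)) • Ee m e q
        + (x * ((x*x) * (sc m e t p * sc m e p t) + (sc m e p q + (x*x) * sc m e t q) * sc m e q t)) • Ee m e t := by
      show m (ppow m a 2) a = _
      rw [h2']
      conv_lhs => rw [ha]
      simp only [map_add, map_smul, LinearMap.add_apply, LinearMap.smul_apply,
        mul_basis m e hnat, Finsupp.coe_add, Finsupp.add_apply,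
        Finsupp.coe_smul, Finsupp.smul_apply, scdef m e, sc_diag m e hnat hnil, hcqp,
        Module.Basis.repr_self, Finsupp.single_eq_same, Finsupp.single_eq_of_ne' hpq,
        Finsupp.single_eq_of_ne' hpq.symm, Finsupp.single_eq_of_ne' hpt,
        Finsupp.single_eq_of_ne' hpt.symm, Finsupp.single_eq_of_ne' hqt,
        Finsupp.single_eq_of_ne' hqt.symm, smul_eq_mul]
      module
    have h := hpa a 1 1
    rw [h1, h3] at h
    have hL : m (Ee m e p + Ee m e q + (x*x) • Ee m e t)
        (Ee m e p + Ee m e q + (x*x) • Ee m e t) = 0 := by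
      simp only [map_add, map_smul, LinearMap.add_apply, LinearMap.smul_apply,
        EE_diag m e hnat hnil hpa,
        EE_ne m e hnat hcomm hnil hpa h2 hpq, EE_ne m e hnat hcomm hnil hpa h2 hpq.symm,
        EE_ne m e hnat hcomm hnil hpa h2 hpt, EE_ne m e hnat hcomm hnil hpa h2 hpt.symm,
        EE_ne m e hnat hcomm hnil hpa h2 hqt, EE_ne m e hnat hcomm hnil hpa h2 hqt.symm]
      module
    rw [hL] at h
    exact h
  have hP := hgen 1
  have hM := hgen (-1)
  have hsum : ((2:F) * (sc m e t p * sc m e p q)) • Ee m e q = 0 := by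
    have : ((2:F) * (sc m e t p * sc m e p q)) • Ee m e q = 0 + 0 := by
      nth_rewrite 1 [hP]; nth_rewrite 1 [hM]
      module
    simpa using this
  rcases smul_eq_zero.mp hsum with h | h
  · rcases mul_eq_zero.mp h with h | h
    · exact absurd h h2
    · rcases mul_eq_zero.mp h with h | h
      · exact h
      · exact absurd h hcpq
  · exact absurd h hEq

end EvolAux


open EvolAux in
/-- a 4-dimensional nil power-associative evolution algebra over a field of
characteristic ≠ 2, indecomposable and not associative, is isomorphic to `N_{4,6}`:
`v₁² = v₂ + v₃`, `v₂² = v₄`, `v₃² = −v₄`, `v₄² = 0`. -/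
theorem nil_pa_nonassoc_indecomposable_dim4_classification
    (F : Type*) [Field F] (h2 : (2 : F) ≠ 0)
    (A : Type*) [AddCommGroup A] [Module F A]
    (m : A →ₗ[F] A →ₗ[F] A) (hcomm : ∀ x y : A, m x y = m y x)
    (e : Module.Basis (Fin 4) F A)
    (hnat : ∀ i j : Fin 4, i ≠ j → m (e i) (e j) = 0)
    (hnil : ∀ a : A, ∃ k : ℕ, ppow m a k = 0)
    (hpa : ∀ (a : A) (i j : ℕ),
      m (ppow m a i) (ppow m a j) = ppow m a (i + j + 1))
    (hnotassoc : ¬ ∀ x y z : A, m (m x y) z = m x (m y z))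
    (hindec : ¬ ∃ I J : Submodule F A,
      (∀ x ∈ I, ∀ y : A, m x y ∈ I) ∧ (∀ x ∈ J, ∀ y : A, m x y ∈ J) ∧
      I ≠ ⊥ ∧ J ≠ ⊥ ∧ IsCompl I J) :
    ∃ v : Module.Basis (Fin 4) F A,
      (∀ i j : Fin 4, i ≠ j → m (v i) (v j) = 0) ∧
      m (v 0) (v 0) = v 1 + v 2 ∧
      m (v 1) (v 1) = v 3 ∧
      m (v 2) (v 2) = -v 3 ∧
      m (v 3) (v 3) = 0 := by
  classical
  -- Step 1: extract a length-2 path from non-associativity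
  obtain ⟨u, vv, hcu, hEv⟩ : ∃ i j, sc m e i j ≠ 0 ∧ Ee m e j ≠ 0 := by
    by_contra hcon
    push_neg at hcon
    have hz2 : ∀ i j, sc m e i j • Ee m e j = 0 := by
      intro i j
      by_cases h : sc m e i j = 0
      · rw [h, zero_smul]
      · rw [hcon i j h, smul_zero]
    have hEz : ∀ (k : Fin 4) (z : A), m (Ee m e k) z = 0 := by
      intro k z
      conv_lhs => rw [expand e z]
      simp only [map_add, map_smul, mEe m e hnat, hz2, smul_zero, add_zero]
    apply hnotassoc
    intro x y z
    have hxy : m (m x y) z = 0 := by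
      rw [mul_expand m e hnat x y]
      simp only [map_sum, LinearMap.sum_apply, map_smul, LinearMap.smul_apply,
        hEz, smul_zero, Finset.sum_const_zero]
    have hyz : m x (m y z) = 0 := by
      rw [hcomm, mul_expand m e hnat y z]
      simp only [map_sum, LinearMap.sum_apply, map_smul, LinearMap.smul_apply,
        hEz, smul_zero, Finset.sum_const_zero]
    rw [hxy, hyz]
  obtain ⟨w, hcvw⟩ : ∃ k, sc m e vv k ≠ 0 := by
    by_contra hcon
    push_neg at hcon
    apply hEv
    rw [expand e (Ee m e vv)]
    simp only [scdef m e, hcon, zero_smul, add_zero]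
  -- distinctness
  have huv : u ≠ vv := by
    intro h; rw [h] at hcu; exact hcu (sc_diag m e hnat hnil vv)
  have hvw : vv ≠ w := by
    intro h; rw [h] at hcvw; exact hcvw (sc_diag m e hnat hnil w)
  have huw : u ≠ w := by
    intro h
    rcases mul_eq_zero.mp (sc_cycle2 m e hnat hcomm hnil hpa h2 hvw) with hh | hh
    · exact hcvw hh
    · rw [← h] at hh; exact hcu hh
  -- w is a sink
  have hEw : Ee m e w = 0 := by
    by_contra hEw
    exact hcu (triple m e hnat hcomm hnil hpa h2 hvw (Ne.symm huv) (Ne.symm huw) hcvw hEw)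
  -- a fourth index
  obtain ⟨z, hzu, hzv, hzw⟩ : ∃ z : Fin 4, z ≠ u ∧ z ≠ vv ∧ z ≠ w := by
    by_contra hC
    push_neg at hC
    have h1 : (Finset.univ : Finset (Fin 4)) ⊆ {u, vv, w} := by
      intro k _
      rcases eq_or_ne k u with rfl | h1
      · simp
      rcases eq_or_ne k vv with rfl | h2'
      · simp
      rcases eq_or_ne k w with rfl | h3
      · simp
      exact absurd (hC k h1 h2') h3
    have h4 : (4:ℕ) ≤ ({u, vv, w} : Finset (Fin 4)).card := by
      have := Finset.card_le_card h1
      simpa using this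
    have h5 : ({u, vv, w} : Finset (Fin 4)).card ≤ 3 := by
      refine le_trans (Finset.card_insert_le _ _) ?_
      have := Finset.card_insert_le vv ({w} : Finset (Fin 4))
      simp only [Finset.card_singleton] at this ⊢
      omega
    omega
  have huz : u ≠ z := hzu.symm
  have hvz : vv ≠ z := hzv.symm
  have hzw' : z ≠ w := hzw
  -- enumeration of Fin 4
  have hcard : ({u, vv, z, w} : Finset (Fin 4)).card = 4 := by
    rw [Finset.card_insert_of_notMem (by simp [huv, huz, huw]),
      Finset.card_insert_of_notMem (by simp [hvz, hvw]),
      Finset.card_insert_of_notMem (by simp [hzw']),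
      Finset.card_singleton]
  have huniv : (Finset.univ : Finset (Fin 4)) = {u, vv, z, w} :=
    (Finset.eq_univ_of_card _ (by rw [hcard]; rfl)).symm
  have hall : ∀ k : Fin 4, k = u ∨ k = vv ∨ k = z ∨ k = w := by
    intro k
    have : k ∈ ({u, vv, z, w} : Finset (Fin 4)) := by
      rw [← huniv]; exact Finset.mem_univ k
    simpa using this
  -- the key quadratic relation
  have hS : (sc m e u vv * sc m e u vv) • Ee m e vv
      + (sc m e u z * sc m e u z) • Ee m e z = 0 := by
    have h := EE_diag m e hnat hnil hpa u
    rw [mul_expand m e hnat] at h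
    rw [huniv, Finset.sum_insert (by simp [huv, huz, huw]),
      Finset.sum_insert (by simp [hvz, hvw]),
      Finset.sum_insert (by simp [hzw']), Finset.sum_singleton] at h
    simp only [scdef m e, sc_diag m e hnat hnil, hEw, smul_zero, zero_mul,
      zero_smul, zero_add, add_zero] at h
    exact h
  have hcuz : sc m e u z ≠ 0 := by
    intro h
    rw [h, zero_mul, zero_smul, add_zero] at hS
    rcases smul_eq_zero.mp hS with h' | h'
    · exact (mul_ne_zero hcu hcu) h'
    · exact hEv h'
  have hEz : Ee m e z ≠ 0 := by
    intro h
    rw [h, smul_zero, add_zero] at hS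
    rcases smul_eq_zero.mp hS with h' | h'
    · exact (mul_ne_zero hcu hcu) h'
    · exact hEv h'
  -- remaining structure constants of row vv
  have hcvu : sc m e vv u = 0 := by
    rcases mul_eq_zero.mp (sc_cycle2 m e hnat hcomm hnil hpa h2 huv) with hh | hh
    · exact absurd hh hcu
    · exact hh
  have hcvz : sc m e vv z = 0 := by
    by_contra hcvz
    exact hcu (triple m e hnat hcomm hnil hpa h2 hvz (Ne.symm huv) hzu hcvz hEz)
  have hEvw : Ee m e vv = sc m e vv w • e w := by
    apply e.ext_elem
    intro k
    rcases hall k with rfl | rfl | rfl | rfl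
    all_goals rw [scdef m e]
    all_goals simp [hcvu, hcvz, sc_diag m e hnat hnil, map_smul, Module.Basis.repr_self,
      Finsupp.smul_single, Finsupp.single_apply, huv, huz, huw, hvz, hvw, hzw',
      Ne.symm huv, Ne.symm huz, Ne.symm huw, Ne.symm hvz, Ne.symm hvw, Ne.symm hzw']
  have hEu : Ee m e u = sc m e u vv • e vv + sc m e u z • e z + sc m e u w • e w := by
    apply e.ext_elem
    intro k
    rcases hall k with rfl | rfl | rfl | rfl <;> rw [scdef m e] <;>
      simp [sc_diag m e hnat hnil, map_add, map_smul, Module.Basis.repr_self,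
        Finsupp.smul_single, Finsupp.single_apply, huv, huz, huw, hvz, hvw, hzw',
        Ne.symm huv, Ne.symm huz, Ne.symm huw, Ne.symm hvz, Ne.symm hvw, Ne.symm hzw']
  have hEzw : (sc m e u z * sc m e u z) • Ee m e z
      = (-(sc m e u vv * sc m e u vv * sc m e vv w)) • e w := by
    rw [hEvw] at hS
    linear_combination (norm := module) hS
  -- basis construction
  set K : F := sc m e u vv * sc m e u vv * sc m e vv w with hKdef
  have hK : K ≠ 0 := mul_ne_zero (mul_ne_zero hcu hcu) hcvw
  have hinj : Function.Injective ![u, vv, z, w] :=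
    inj4 huv huz huw hvz hvw hzw'
  let σ : Fin 4 ≃ Fin 4 := Equiv.ofBijective _ (Finite.injective_iff_bijective.mp hinj)
  let du : Fin 4 → Fˣ := ![1, Units.mk0 _ hcu, Units.mk0 _ hcuz, Units.mk0 _ hK]
  let b1 : Module.Basis (Fin 4) F A := (e.reindex σ.symm).unitsSMul du
  have hb : ∀ i : Fin 4, b1 i = (du i : F) • e (![u, vv, z, w] i) := by
    intro i
    simp [b1, Module.Basis.unitsSMul_apply, Module.Basis.reindex_apply, σ, Units.smul_def]
  have hb0 : b1 0 = e u := by rw [hb 0]; simp [du]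
  have hb1 : b1 1 = sc m e u vv • e vv := by rw [hb 1]; simp [du]
  have hb2 : b1 2 = sc m e u z • e z := by rw [hb 2]; simp [du]
  have hb3 : b1 3 = K • e w := by rw [hb 3]; simp [du]
  let T : A →ₗ[F] A := (b1.coord 1).smulRight ((sc m e u w / K) • b1 3)
  have hcoord13 : b1.coord 1 (b1 3) = 0 := by
    simp [Module.Basis.coord_apply, Module.Basis.repr_self, Finsupp.single_apply]
  have hTT : ∀ x : A, T (T x) = 0 := by
    intro x
    simp only [T, LinearMap.smulRight_apply, map_smul, smul_eq_mul,
      Module.Basis.coord_apply, map_smul, Finsupp.smul_apply]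
    rw [show (b1.repr (b1 3)) 1 = 0 from hcoord13]
    simp
  let g : A ≃ₗ[F] A := LinearEquiv.ofLinear (LinearMap.id + T) (LinearMap.id - T)
    (by ext x
        simp only [LinearMap.comp_apply, LinearMap.add_apply, LinearMap.sub_apply,
          LinearMap.id_apply, map_sub, hTT, LinearMap.id_coe, id_eq]
        abel)
    (by ext x
        simp only [LinearMap.comp_apply, LinearMap.add_apply, LinearMap.sub_apply,
          LinearMap.id_apply, map_add, hTT, LinearMap.id_coe, id_eq]
        abel)
  let vB : Module.Basis (Fin 4) F A := b1.map g
  have hg : ∀ x : A, g x = x + T x := fun x => rfl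
  have hT : ∀ x : A, T x = (b1.repr x 1) • ((sc m e u w / K) • b1 3) := fun x => rfl
  have hv0 : vB 0 = e u := by
    have h' : vB 0 = g (b1 0) := Module.Basis.map_apply _ _ _
    rw [h', hg, hT, show b1.repr (b1 0) 1 = 0 by
      simp [Module.Basis.repr_self, Finsupp.single_apply]]
    rw [zero_smul, add_zero, hb0]
  have hv1 : vB 1 = sc m e u vv • e vv + sc m e u w • e w := by
    have h' : vB 1 = g (b1 1) := Module.Basis.map_apply _ _ _
    rw [h', hg, hT, show b1.repr (b1 1) 1 = (1:F) by simp [Module.Basis.repr_self]]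
    rw [one_smul, hb1, hb3, smul_smul, div_mul_cancel₀ _ hK]
  have hv2 : vB 2 = sc m e u z • e z := by
    have h' : vB 2 = g (b1 2) := Module.Basis.map_apply _ _ _
    rw [h', hg, hT, show b1.repr (b1 2) 1 = 0 by
      simp [Module.Basis.repr_self, Finsupp.single_apply]]
    rw [zero_smul, add_zero, hb2]
  have hv3 : vB 3 = K • e w := by
    have h' : vB 3 = g (b1 3) := Module.Basis.map_apply _ _ _
    rw [h', hg, hT, show b1.repr (b1 3) 1 = 0 by
      simp [Module.Basis.repr_self, Finsupp.single_apply]]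
    rw [zero_smul, add_zero, hb3]
  have hEw' : m (e w) (e w) = 0 := hEw
  have hEvw' : m (e vv) (e vv) = sc m e vv w • e w := hEvw
  have nuv := hnat u vv huv
  have nvu := hnat vv u (Ne.symm huv)
  have nuz := hnat u z huz
  have nzu := hnat z u (Ne.symm huz)
  have nuw := hnat u w huw
  have nwu := hnat w u (Ne.symm huw)
  have nvz := hnat vv z hvz
  have nzv := hnat z vv (Ne.symm hvz)
  have nvw := hnat vv w hvw
  have nwv := hnat w vv (Ne.symm hvw)
  have nzw := hnat z w hzw'
  have nwz := hnat w z (Ne.symm hzw')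
  refine ⟨vB, ?_, ?_, ?_, ?_, ?_⟩
  · intro i j hij
    fin_cases i <;> fin_cases j <;>
      first
        | exact absurd rfl hij
        | simp [hv0, hv1, hv2, hv3, map_add, map_smul, LinearMap.add_apply,
            LinearMap.smul_apply, nuv, nvu, nuz, nzu, nuw, nwu, nvz, nzv, nvw, nwv,
            nzw, nwz, hEw']
  · rw [hv0, hv1, hv2, show m (e u) (e u) = Ee m e u from rfl, hEu]
    module
  · rw [hv1, hv3]
    simp only [map_add, map_smul, LinearMap.add_apply, LinearMap.smul_apply,
      nvw, nwv, hEw', hEvw', smul_zero, add_zero]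
    rw [hKdef]
    module
  · rw [hv2, hv3]
    have : m (sc m e u z • e z) (sc m e u z • e z)
        = (sc m e u z * sc m e u z) • Ee m e z := by
      simp only [map_smul, LinearMap.smul_apply, smul_smul]
      rfl
    rw [this, hEzw, hKdef]
    module
  · rw [hv3]
    simp [map_smul, LinearMap.smul_apply, hEw']
end

section
/- Let N be a 5-dimensional nil evolution algebra over a field F of characteristic ≠ 2 which is associative and indecomposable. Then N admits a natural basis (v_1, …, v_5) such that one of the following holds: (a) there exist nonzero α, β, γ ∈ F with v_1·v_1 = v_5, v_2·v_2 = α·v_5, v_3·v_3 = β·v_5, v_4·v_4 = γ·v_5, v_5·v_5 = 0 (the algebra N_{5,8}(α,β,γ)); or (b) there exist nonzero α, β ∈ F with v_1·v_1 = v_4, v_2·v_2 = α·v_4 + β·v_5, v_3·v_3 = v_5, v_4·v_4 = 0, v_5·v_5 = 0 (the algebra N_{5,9}(α,β)). -/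
private lemma fin5_cases_aux (j k : Fin 5) (h : k ≠ j) :
    k = j + 1 ∨ k = j + 2 ∨ k = j + 3 ∨ k = j + 4 := by
  revert j k; decide

private lemma fin5_ne34 (i : Fin 5) (h0 : i ≠ 0) (h1 : i ≠ 1) (h2 : i ≠ 2) :
    i = 3 ∨ i = 4 := by revert i; decide

private lemma offdiag_of_ten {F A : Type*} [Field F] [AddCommGroup A] [Module F A]
    (m : A →ₗ[F] A →ₗ[F] A) (hcomm : ∀ x y : A, m x y = m y x) (v : Fin 5 → A)
    (h01 : m (v 0) (v 1) = 0) (h02 : m (v 0) (v 2) = 0) (h03 : m (v 0) (v 3) = 0)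
    (h04 : m (v 0) (v 4) = 0) (h12 : m (v 1) (v 2) = 0) (h13 : m (v 1) (v 3) = 0)
    (h14 : m (v 1) (v 4) = 0) (h23 : m (v 2) (v 3) = 0) (h24 : m (v 2) (v 4) = 0)
    (h34 : m (v 3) (v 4) = 0) :
    ∀ i j : Fin 5, i ≠ j → m (v i) (v j) = 0 := by
  intro i j hij
  fin_cases i <;> fin_cases j <;>
    first
      | exact absurd rfl hij
      | assumption
      | (rw [hcomm]; assumption)

private lemma ideal_span_of {F A : Type*} [Field F] [AddCommGroup A] [Module F A]
    (m : A →ₗ[F] A →ₗ[F] A) (s : Set A)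
    (h : ∀ g ∈ s, ∀ y, m g y ∈ Submodule.span F s) :
    ∀ x ∈ Submodule.span F s, ∀ y, m x y ∈ Submodule.span F s := by
  intro x hx y
  induction hx using Submodule.span_induction with
  | mem g hg => exact h g hg y
  | zero => simp
  | add a b _ _ ha hb => rw [map_add, LinearMap.add_apply]; exact add_mem ha hb
  | smul t a _ ha => rw [map_smul, LinearMap.smul_apply]; exact Submodule.smul_mem _ t ha

private lemma split_decomp {F A : Type*} [Field F] [AddCommGroup A] [Module F A]
    (m : A →ₗ[F] A →ₗ[F] A) (b : Module.Basis (Fin 5) F A) (s : Set (Fin 5))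
    (h0 : s.Nonempty) (h1 : sᶜ.Nonempty)
    (hI : ∀ i ∈ s, ∀ y, m (b i) y ∈ Submodule.span F (⇑b '' s))
    (hJ : ∀ i ∈ sᶜ, ∀ y, m (b i) y ∈ Submodule.span F (⇑b '' sᶜ)) :
    ∃ I J : Submodule F A, (∀ x ∈ I, ∀ y : A, m x y ∈ I) ∧ (∀ x ∈ J, ∀ y : A, m x y ∈ J) ∧
      I ≠ ⊥ ∧ J ≠ ⊥ ∧ IsCompl I J := by
  refine ⟨Submodule.span F (⇑b '' s), Submodule.span F (⇑b '' sᶜ), ?_, ?_, ?_, ?_, ?_, ?_⟩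
  · refine ideal_span_of m _ ?_
    rintro g ⟨i, hi, rfl⟩ y; exact hI i hi y
  · refine ideal_span_of m _ ?_
    rintro g ⟨i, hi, rfl⟩ y; exact hJ i hi y
  · obtain ⟨i, hi⟩ := h0
    exact (Submodule.ne_bot_iff _).mpr
      ⟨b i, Submodule.subset_span ⟨i, hi, rfl⟩, b.ne_zero i⟩
  · obtain ⟨i, hi⟩ := h1
    exact (Submodule.ne_bot_iff _).mpr
      ⟨b i, Submodule.subset_span ⟨i, hi, rfl⟩, b.ne_zero i⟩
  · exact b.linearIndependent.disjoint_span_image disjoint_compl_right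
  · rw [codisjoint_iff, ← Submodule.span_union, ← Set.image_union,
      Set.union_compl_self, Set.image_univ, b.span_eq]

/-- a 5-dimensional nil, associative, indecomposable evolution algebra over
a field of characteristic ≠ 2 is isomorphic to `N_{5,8}(α,β,γ)` or `N_{5,9}(α,β)`. -/
theorem nil_assoc_indecomposable_dim5_classification
    (F : Type*) [Field F] (h2 : (2 : F) ≠ 0)
    (A : Type*) [AddCommGroup A] [Module F A]
    (m : A →ₗ[F] A →ₗ[F] A) (hcomm : ∀ x y : A, m x y = m y x)
    (e : Module.Basis (Fin 5) F A)
    (hnat : ∀ i j : Fin 5, i ≠ j → m (e i) (e j) = 0)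
    (hnil : ∀ a : A, ∃ k : ℕ, ppow m a k = 0)
    (hassoc : ∀ x y z : A, m (m x y) z = m x (m y z))
    (hindec : ¬ ∃ I J : Submodule F A,
      (∀ x ∈ I, ∀ y : A, m x y ∈ I) ∧ (∀ x ∈ J, ∀ y : A, m x y ∈ J) ∧
      I ≠ ⊥ ∧ J ≠ ⊥ ∧ IsCompl I J) :
    ∃ v : Module.Basis (Fin 5) F A,
      (∀ i j : Fin 5, i ≠ j → m (v i) (v j) = 0) ∧
      ((∃ α β γ : F, α ≠ 0 ∧ β ≠ 0 ∧ γ ≠ 0 ∧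
          m (v 0) (v 0) = v 4 ∧
          m (v 1) (v 1) = α • v 4 ∧
          m (v 2) (v 2) = β • v 4 ∧
          m (v 3) (v 3) = γ • v 4 ∧
          m (v 4) (v 4) = 0) ∨
       (∃ α β : F, α ≠ 0 ∧ β ≠ 0 ∧
          m (v 0) (v 0) = v 3 ∧
          m (v 1) (v 1) = α • v 3 + β • v 4 ∧
          m (v 2) (v 2) = v 4 ∧
          m (v 3) (v 3) = 0 ∧
          m (v 4) (v 4) = 0)) := by
  classical
  haveI : FiniteDimensional F A := Module.Basis.finiteDimensional_of_finite e
  have hfr : Module.finrank F A = 5 := by rw [Module.finrank_eq_card_basis e]; simp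
  have hcard : Fintype.card (Fin 5) = Module.finrank F A := by rw [hfr]; simp
  set sq : Fin 5 → A := fun i => m (e i) (e i) with hsqdef
  -- multiplication of a basis vector with a general element
  have H1 : ∀ (i : Fin 5) (y : A), m (e i) y = e.repr y i • sq i := by
    intro i y
    conv_lhs => rw [← e.sum_repr y]
    rw [map_sum, Finset.sum_eq_single i]
    · rw [map_smul]
    · intro j _ hj
      rw [map_smul, hnat i j (fun h => hj h.symm), smul_zero]
    · intro h; exact absurd (Finset.mem_univ i) h
  -- associativity consequence
  have F1 : ∀ i j : Fin 5, i ≠ j → e.repr (sq i) j • sq j = 0 := by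
    intro i j hij
    have h0 : m (sq i) (e j) = 0 := by
      show m (m (e i) (e i)) (e j) = 0
      rw [hassoc, hnat i j hij, map_zero]
    rw [← H1 j (sq i), hcomm, h0]
  -- nilpotency consequence
  have F2 : ∀ i : Fin 5, sq i ≠ 0 → e.repr (sq i) i = 0 := by
    intro i hi
    set c := e.repr (sq i) i with hc
    have hpow : ∀ k : ℕ, ppow m (e i) (k + 1) = c ^ k • sq i := by
      intro k; induction k with
      | zero =>
        show m (e i) (e i) = c ^ 0 • sq i
        rw [pow_zero, one_smul]
      | succ k ih =>
        show m (ppow m (e i) (k + 1)) (e i) = _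
        rw [ih, map_smul, LinearMap.smul_apply, hcomm (sq i) (e i)]
        nth_rewrite 1 [H1 i (sq i)]
        rw [← hc, smul_smul, ← pow_succ]
    obtain ⟨n, hn⟩ := hnil (e i)
    match n, hn with
    | 0, hn => exact absurd hn (e.ne_zero i)
    | (k+1), hn =>
      rw [hpow k] at hn
      rcases smul_eq_zero.mp hn with h | h
      · match k, h with
        | 0, h => rw [pow_zero] at h; exact absurd h one_ne_zero
        | (l+1), h => exact pow_eq_zero_iff (Nat.succ_ne_zero l) |>.mp h
      · exact absurd h hi
  -- squares lie in the span of null basis vectors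
  set Zs : Submodule F A := Submodule.span F (⇑e '' {j | sq j = 0}) with hZs
  have H4 : ∀ i, sq i ∈ Zs := by
    intro i
    by_cases hi : sq i = 0
    · rw [hi]; exact zero_mem _
    · rw [← e.sum_repr (sq i)]
      apply Submodule.sum_mem
      intro j _
      by_cases hj : sq j = 0
      · exact Submodule.smul_mem _ _ (Submodule.subset_span ⟨j, hj, rfl⟩)
      · have hz : e.repr (sq i) j = 0 := by
          by_cases hij : i = j
          · subst hij; exact F2 i hi
          · rcases smul_eq_zero.mp (F1 i j hij) with h | h
            · exact h
            · exact absurd h hj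
        rw [hz, zero_smul]; exact zero_mem _
  -- everything in Zs annihilates
  have H5 : ∀ z ∈ Zs, ∀ y, m z y = 0 := by
    intro z hz y
    induction hz using Submodule.span_induction with
    | mem g hg =>
      obtain ⟨j, hj, rfl⟩ := hg
      have hj' : sq j = 0 := hj
      rw [H1 j y, hj', smul_zero]
    | zero => simp
    | add a b _ _ ha hb => rw [map_add, LinearMap.add_apply, ha, hb, add_zero]
    | smul t a _ ha => rw [map_smul, LinearMap.smul_apply, ha, smul_zero]
  -- product expansion
  have H2 : ∀ x y : A, m x y = ∑ i, e.repr x i • (e.repr y i • sq i) := by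
    intro x y
    conv_lhs => rw [← e.sum_repr x]
    rw [map_sum, LinearMap.sum_apply]
    refine Finset.sum_congr rfl fun i _ => ?_
    rw [map_smul, LinearMap.smul_apply, H1]
  -- the span of non-null basis vectors together with all squares is everything
  set S : Set (Fin 5) := {i | sq i ≠ 0} with hS
  set Us : Set A := (⇑e '' S) ∪ (sq '' S) with hUs
  have Utop : Submodule.span F Us = ⊤ := by
    by_contra hU
    have hlt : Submodule.span F Us < ⊤ := lt_of_le_of_ne le_top hU
    obtain ⟨x, -, hx⟩ := SetLike.exists_of_lt hlt
    obtain ⟨f, hfx, hfU⟩ := Submodule.exists_dual_map_eq_bot_of_notMem hx inferInstance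
    have hfU' : ∀ u ∈ Submodule.span F Us, f u = 0 := by
      intro u hu
      have h := Submodule.mem_map_of_mem (f := f) hu
      rw [hfU, Submodule.mem_bot] at h; exact h
    have hsq0 : ∀ i, f (sq i) = 0 := by
      intro i; by_cases hi : sq i = 0
      · rw [hi, map_zero]
      · exact hfU' _ (Submodule.subset_span (Or.inr ⟨i, hi, rfl⟩))
    have hex : ∃ z ∈ Zs, f z ≠ 0 := by
      by_contra h
      push_neg at h
      have he : ∀ k, f (e k) = 0 := by
        intro k; by_cases hk : sq k = 0
        · exact h _ (Submodule.subset_span ⟨k, hk, rfl⟩)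
        · exact hfU' _ (Submodule.subset_span (Or.inl ⟨k, hk, rfl⟩))
      apply hfx
      rw [← e.sum_repr x, map_sum]
      refine Finset.sum_eq_zero fun k _ => ?_
      rw [map_smul, he, smul_zero]
    obtain ⟨z0, hz0, hfz0⟩ := hex
    obtain ⟨z, hzZ, hfz⟩ : ∃ z, z ∈ Zs ∧ f z = 1 :=
      ⟨(f z0)⁻¹ • z0, Submodule.smul_mem _ _ hz0, by
        rw [map_smul, smul_eq_mul, inv_mul_cancel₀ hfz0]⟩
    refine hindec ⟨LinearMap.ker f, Submodule.span F {z}, ?_, ?_, ?_, ?_, ?_, ?_⟩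
    · intro x' _ y
      refine LinearMap.mem_ker.mpr ?_
      rw [H2, map_sum]
      refine Finset.sum_eq_zero fun i _ => ?_
      rw [map_smul, map_smul, hsq0, smul_zero, smul_zero]
    · intro x' hx' y
      obtain ⟨t, rfl⟩ := Submodule.mem_span_singleton.mp hx'
      rw [map_smul, LinearMap.smul_apply, H5 z hzZ y, smul_zero]
      exact zero_mem _
    · -- ker f ≠ ⊥
      have hexk : ∃ k, e k - f (e k) • z ≠ 0 := by
        by_contra h; push_neg at h
        obtain ⟨t0, h0⟩ : ∃ t0 : F, e 0 = t0 • z :=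
          ⟨f (e 0), by have := h 0; rwa [sub_eq_zero] at this⟩
        obtain ⟨t1, h1⟩ : ∃ t1 : F, e 1 = t1 • z :=
          ⟨f (e 1), by have := h 1; rwa [sub_eq_zero] at this⟩
        have hcomb : t1 • e 0 = t0 • e 1 := by
          rw [h0, h1, smul_smul, smul_smul, mul_comm t1 t0]
        have hc2 := congrArg (fun w => e.repr w 0) hcomb
        simp only [map_smul, Finsupp.smul_apply, Module.Basis.repr_self] at hc2
        rw [Finsupp.single_eq_same, Finsupp.single_eq_of_ne' (by decide : (1 : Fin 5) ≠ 0)] at hc2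
        rw [smul_eq_mul, smul_eq_mul, mul_one, mul_zero] at hc2
        exact e.ne_zero 1 (by rw [h1, hc2, zero_smul])
      obtain ⟨k, hk⟩ := hexk
      refine (Submodule.ne_bot_iff _).mpr ⟨e k - f (e k) • z, ?_, hk⟩
      rw [LinearMap.mem_ker, map_sub, map_smul, hfz, smul_eq_mul, mul_one, sub_self]
    · refine (Submodule.ne_bot_iff _).mpr ⟨z, Submodule.mem_span_singleton_self z, ?_⟩
      intro h; rw [h, map_zero] at hfz; exact zero_ne_one hfz
    · rw [Submodule.disjoint_def]
      intro a haK haz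
      obtain ⟨t, rfl⟩ := Submodule.mem_span_singleton.mp haz
      have h := LinearMap.mem_ker.mp haK
      rw [map_smul, hfz, smul_eq_mul, mul_one] at h
      rw [h, zero_smul]
    · rw [codisjoint_iff, eq_top_iff]
      intro a _
      rw [Submodule.mem_sup]
      refine ⟨a - f a • z, ?_, f a • z,
        Submodule.smul_mem _ _ (Submodule.mem_span_singleton_self z), sub_add_cancel a _⟩
      rw [LinearMap.mem_ker, map_sub, map_smul, hfz, smul_eq_mul, mul_one, sub_self]
  -- the set of non-null indices
  set T : Finset (Fin 5) := Finset.univ.filter (fun i => sq i ≠ 0) with hT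
  have hTmem : ∀ i, i ∈ T ↔ sq i ≠ 0 := by intro i; simp [hT]
  have hTcard_ge : 3 ≤ T.card := by
    by_contra hcon
    push_neg at hcon
    set B : Finset A := T.image ⇑e ∪ T.image sq with hB
    have hUsB : Us ⊆ ↑B := by
      rw [hUs]
      rintro u (⟨i, hi, rfl⟩ | ⟨i, hi, rfl⟩)
      · simp only [hB, Finset.coe_union, Set.mem_union, Finset.coe_image, Set.mem_image]
        exact Or.inl ⟨i, (hTmem i).mpr hi, rfl⟩
      · simp only [hB, Finset.coe_union, Set.mem_union, Finset.coe_image, Set.mem_image]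
        exact Or.inr ⟨i, (hTmem i).mpr hi, rfl⟩
    have hle : (⊤ : Submodule F A) ≤ Submodule.span F (B : Set A) := by
      rw [← Utop]; exact Submodule.span_mono hUsB
    have h5 : 5 ≤ B.card := by
      have h1 := finrank_span_finset_le_card (R := F) B
      rw [Set.finrank, top_le_iff.mp hle, finrank_top, hfr] at h1
      exact h1
    have hcb : B.card ≤ T.card + T.card :=
      le_trans (Finset.card_union_le _ _)
        (Nat.add_le_add Finset.card_image_le Finset.card_image_le)
    omega
  have hTne : ∃ j, sq j = 0 := by
    by_contra h; push_neg at h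
    have hempty : {j | sq j = 0} = (∅ : Set (Fin 5)) := by ext j; simp [h j]
    have h4 := H4 0
    rw [hZs, hempty, Set.image_empty, Submodule.span_empty, Submodule.mem_bot] at h4
    exact h 0 h4
  have hTcard_le : T.card ≤ 4 := by
    obtain ⟨j, hj⟩ := hTne
    have hjT : j ∉ T := by simp [hTmem, hj]
    have hne : T ≠ Finset.univ := fun h => hjT (h ▸ Finset.mem_univ j)
    have hlt : T.card < Finset.univ.card :=
      Finset.card_lt_card ((Finset.subset_univ T).ssubset_of_ne hne)
    simpa using Nat.lt_succ_iff.mp (by simpa using hlt)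
  -- helper annihilation facts
  have hannL : ∀ i, ∀ y, m (sq i) y = 0 := fun i y => H5 (sq i) (H4 i) y
  have hannR : ∀ i, ∀ y, m y (sq i) = 0 := fun i y => (hcomm y (sq i)).trans (hannL i y)
  have hcases : T.card = 3 ∨ T.card = 4 := by omega
  rcases hcases with h3 | h4
  · -- |S| = 3 : case N_{5,9}
    have hc2 : Tᶜ.card = 2 := by rw [Finset.card_compl, h3]; simp
    obtain ⟨j0, j1, hj01, hjc⟩ := Finset.card_eq_two.mp hc2
    obtain ⟨a, b, c, hab, hac, hbc, hTabc⟩ := Finset.card_eq_three.mp h3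
    have hmemT : ∀ i, sq i ≠ 0 ↔ (i = a ∨ i = b ∨ i = c) := by
      intro i; rw [← hTmem, hTabc]; simp
    have hmemZ : ∀ i, sq i = 0 ↔ (i = j0 ∨ i = j1) := by
      intro i
      constructor
      · intro h
        have hi : i ∈ Tᶜ := by simp [Finset.mem_compl, hTmem, h]
        rw [hjc] at hi; simpa using hi
      · intro h
        have hi : i ∈ Tᶜ := by rw [hjc]; rcases h with rfl | rfl <;> simp
        rw [Finset.mem_compl, hTmem] at hi
        exact not_not.mp hi
    have hsa : sq a ≠ 0 := (hmemT a).mpr (Or.inl rfl)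
    have hsb : sq b ≠ 0 := (hmemT b).mpr (Or.inr (Or.inl rfl))
    have hsc : sq c ≠ 0 := (hmemT c).mpr (Or.inr (Or.inr rfl))
    have hZs' : Zs = Submodule.span F {e j0, e j1} := by
      rw [hZs, show {j | sq j = 0} = ({j0, j1} : Set (Fin 5)) from by
        ext j; simp [hmemZ], Set.image_insert_eq, Set.image_singleton]
    have hSabc : S = ({a, b, c} : Set (Fin 5)) := by
      ext i; simp only [hS, Set.mem_setOf_eq, hmemT]; simp
    -- key decomposition argument for a proportional pair
    have key : ∀ x y z' : Fin 5,
        S = ({x, y, z'} : Set (Fin 5)) → (∃ t : F, sq y = t • sq x) → False := by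
      intro x y z' hset ⟨t, ht⟩
      have hspan : ⊤ ≤ Submodule.span F
          (Set.range ![e x, e y, sq x, e z', sq z']) := by
        rw [← Utop]
        apply Submodule.span_le.mpr
        rintro u (⟨i, hi, rfl⟩ | ⟨i, hi, rfl⟩)
        · have hi' : i = x ∨ i = y ∨ i = z' := by
            have := hset ▸ hi; simpa using this
          rcases hi' with rfl | rfl | rfl
          · exact Submodule.subset_span ⟨0, rfl⟩
          · exact Submodule.subset_span ⟨1, rfl⟩
          · exact Submodule.subset_span ⟨3, rfl⟩
        · have hi' : i = x ∨ i = y ∨ i = z' := by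
            have := hset ▸ hi; simpa using this
          rcases hi' with rfl | rfl | rfl
          · exact Submodule.subset_span ⟨2, rfl⟩
          · rw [ht]
            exact Submodule.smul_mem _ _ (Submodule.subset_span ⟨2, rfl⟩)
          · exact Submodule.subset_span ⟨4, rfl⟩
      set b' := basisOfTopLeSpanOfCardEqFinrank _ hspan hcard with hb'def
      have hcoe : ⇑b' = ![e x, e y, sq x, e z', sq z'] :=
        coe_basisOfTopLeSpanOfCardEqFinrank _ hspan hcard
      have hb0 : b' 0 = e x := by rw [hcoe]; rfl
      have hb1 : b' 1 = e y := by rw [hcoe]; rfl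
      have hb2 : b' 2 = sq x := by rw [hcoe]; rfl
      have hb3 : b' 3 = e z' := by rw [hcoe]; rfl
      have hb4 : b' 4 = sq z' := by rw [hcoe]; rfl
      refine hindec (split_decomp m b' ({0, 1, 2} : Set (Fin 5)) ⟨0, by simp⟩
        ⟨3, by simp⟩ ?_ ?_)
      · have hsqx : sq x ∈ Submodule.span F (⇑b' '' {0, 1, 2}) :=
          Submodule.subset_span ⟨2, by simp, hb2⟩
        intro i hi yy
        have hi' : i = 0 ∨ i = 1 ∨ i = 2 := by simpa using hi
        rcases hi' with rfl | rfl | rfl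
        · rw [hb0, H1]; exact Submodule.smul_mem _ _ hsqx
        · rw [hb1, H1, ht]
          exact Submodule.smul_mem _ _ (Submodule.smul_mem _ _ hsqx)
        · rw [hb2, hannL]; exact zero_mem _
      · have hsqz : sq z' ∈ Submodule.span F (⇑b' '' ({0, 1, 2} : Set (Fin 5))ᶜ) :=
          Submodule.subset_span ⟨4, by simp, hb4⟩
        intro i hi yy
        have hi' : i = 3 ∨ i = 4 := by
          have h' : i ≠ 0 ∧ i ≠ 1 ∧ i ≠ 2 := by simpa using hi
          exact fin5_ne34 i h'.1 h'.2.1 h'.2.2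
        rcases hi' with rfl | rfl
        · rw [hb3, H1]; exact Submodule.smul_mem _ _ hsqz
        · rw [hb4, hannL]; exact zero_mem _
    by_cases hab' : ∃ t : F, sq b = t • sq a
    · exact absurd (key a b c hSabc hab') id
    by_cases hac' : ∃ t : F, sq c = t • sq a
    · refine absurd (key a c b ?_ hac') id
      rw [hSabc]; ext i; simp; tauto
    by_cases hbc' : ∃ t : F, sq c = t • sq b
    · refine absurd (key b c a ?_ hbc') id
      rw [hSabc]; ext i; simp; tauto
    -- no pair is proportional: the generic N_{5,9} case
    obtain ⟨p1, q1, hpq1⟩ := Submodule.mem_span_pair.mp (hZs' ▸ H4 a)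
    obtain ⟨p2, q2, hpq2⟩ := Submodule.mem_span_pair.mp (hZs' ▸ H4 c)
    obtain ⟨p3, q3, hpq3⟩ := Submodule.mem_span_pair.mp (hZs' ▸ H4 b)
    have hpq1ne : p1 ≠ 0 ∨ q1 ≠ 0 := by
      by_contra h; push_neg at h
      apply hsa
      rw [← hpq1, h.1, h.2, zero_smul, zero_smul, add_zero]
    have hD : p1 * q2 - q1 * p2 ≠ 0 := by
      intro hD0
      apply hac'
      rcases hpq1ne with h | h
      · refine ⟨p2 / p1, ?_⟩
        rw [← hpq2, ← hpq1, smul_add, smul_smul, smul_smul]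
        congr 1
        · congr 1; field_simp [h]
        · congr 1; field_simp [h]; linear_combination hD0
      · refine ⟨q2 / q1, ?_⟩
        rw [← hpq2, ← hpq1, smul_add, smul_smul, smul_smul]
        congr 1
        · congr 1; field_simp [h]; linear_combination -hD0
        · congr 1; field_simp [h]
    set α : F := (p3 * q2 - q3 * p2) / (p1 * q2 - q1 * p2) with hα
    set β : F := (p1 * q3 - q1 * p3) / (p1 * q2 - q1 * p2) with hβ
    have hlin : sq b = α • sq a + β • sq c := by
      rw [← hpq1, ← hpq2, ← hpq3, smul_add, smul_add, smul_smul, smul_smul,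
        smul_smul, smul_smul, add_add_add_comm, ← add_smul, ← add_smul]
      congr 1
      · congr 1; rw [hα, hβ, div_mul_eq_mul_div, div_mul_eq_mul_div, ← add_div, eq_div_iff hD]; ring
      · congr 1; rw [hα, hβ, div_mul_eq_mul_div, div_mul_eq_mul_div, ← add_div, eq_div_iff hD]; ring
    have hαne : α ≠ 0 := by
      intro h
      apply hbc'
      have hb0 : sq b = β • sq c := by rw [hlin, h, zero_smul, zero_add]
      have hβ0 : β ≠ 0 := fun h' => hsb (by rw [hb0, h', zero_smul])
      exact ⟨β⁻¹, by rw [hb0, smul_smul, inv_mul_cancel₀ hβ0, one_smul]⟩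
    have hβne : β ≠ 0 := by
      intro h
      exact hab' ⟨α, by rw [hlin, h, zero_smul, add_zero]⟩
    have hspan : ⊤ ≤ Submodule.span F (Set.range ![e a, e b, e c, sq a, sq c]) := by
      rw [← Utop]
      apply Submodule.span_le.mpr
      rintro u (⟨i, hi, rfl⟩ | ⟨i, hi, rfl⟩)
      · have hi' : i = a ∨ i = b ∨ i = c := by
          have := hSabc ▸ hi; simpa using this
        rcases hi' with rfl | rfl | rfl
        · exact Submodule.subset_span ⟨0, rfl⟩
        · exact Submodule.subset_span ⟨1, rfl⟩
        · exact Submodule.subset_span ⟨2, rfl⟩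
      · have hi' : i = a ∨ i = b ∨ i = c := by
          have := hSabc ▸ hi; simpa using this
        rcases hi' with rfl | rfl | rfl
        · exact Submodule.subset_span ⟨3, rfl⟩
        · rw [hlin]
          exact Submodule.add_mem _
            (Submodule.smul_mem _ _ (Submodule.subset_span ⟨3, rfl⟩))
            (Submodule.smul_mem _ _ (Submodule.subset_span ⟨4, rfl⟩))
        · exact Submodule.subset_span ⟨4, rfl⟩
    set b' := basisOfTopLeSpanOfCardEqFinrank _ hspan hcard with hb'def
    have hcoe : ⇑b' = ![e a, e b, e c, sq a, sq c] :=
      coe_basisOfTopLeSpanOfCardEqFinrank _ hspan hcard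
    have hb0 : b' 0 = e a := by rw [hcoe]; rfl
    have hb1 : b' 1 = e b := by rw [hcoe]; rfl
    have hb2 : b' 2 = e c := by rw [hcoe]; rfl
    have hb3 : b' 3 = sq a := by rw [hcoe]; rfl
    have hb4 : b' 4 = sq c := by rw [hcoe]; rfl
    refine ⟨b', ?_, Or.inr ⟨α, β, hαne, hβne, ?_, ?_, ?_, ?_, ?_⟩⟩
    · refine offdiag_of_ten m hcomm ⇑b' ?_ ?_ ?_ ?_ ?_ ?_ ?_ ?_ ?_ ?_
      · rw [hb0, hb1]; exact hnat a b hab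
      · rw [hb0, hb2]; exact hnat a c hac
      · rw [hb0, hb3]; exact hannR a _
      · rw [hb0, hb4]; exact hannR c _
      · rw [hb1, hb2]; exact hnat b c hbc
      · rw [hb1, hb3]; exact hannR a _
      · rw [hb1, hb4]; exact hannR c _
      · rw [hb2, hb3]; exact hannR a _
      · rw [hb2, hb4]; exact hannR c _
      · rw [hb3, hb4]; exact hannL a _
    · rw [hb0, hb3]
    · rw [hb1, hb3, hb4]; exact hlin
    · rw [hb2, hb4]
    · rw [hb3]; exact hannL a _
    · rw [hb4]; exact hannL c _
  · -- |S| = 4 : case N_{5,8}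
    have hc1 : Tᶜ.card = 1 := by rw [Finset.card_compl, h4]; simp
    obtain ⟨j0, hj0⟩ := Finset.card_eq_one.mp hc1
    have hmemZ : ∀ i, sq i = 0 ↔ i = j0 := by
      intro i
      constructor
      · intro h
        have hi : i ∈ Tᶜ := by simp [Finset.mem_compl, hTmem, h]
        rw [hj0] at hi; simpa using hi
      · intro h
        have hi : j0 ∈ Tᶜ := by rw [hj0]; simp
        rw [Finset.mem_compl, hTmem] at hi
        rw [h]; exact not_not.mp hi
    have hZs' : Zs = Submodule.span F {e j0} := by
      rw [hZs, show {j | sq j = 0} = ({j0} : Set (Fin 5)) from by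
        ext j; simp [hmemZ], Set.image_singleton]
    have hmul : ∀ i, ∃ t : F, sq i = t • e j0 := by
      intro i
      obtain ⟨t, ht⟩ := Submodule.mem_span_singleton.mp (hZs' ▸ H4 i)
      exact ⟨t, ht.symm⟩
    have hdist : ∀ r s : Fin 5, r ≠ s → j0 + r ≠ j0 + s :=
      fun r s h hh => h (add_left_cancel hh)
    have hne0 : ∀ r : Fin 5, r ≠ 0 → j0 + r ≠ j0 := by
      intro r hr hh
      exact hr (add_left_cancel (by rw [hh, add_zero]))
    obtain ⟨ta, hta⟩ := hmul (j0 + 1)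
    obtain ⟨tb, htb⟩ := hmul (j0 + 2)
    obtain ⟨tc, htc⟩ := hmul (j0 + 3)
    obtain ⟨td, htd⟩ := hmul (j0 + 4)
    have hsqa : sq (j0 + 1) ≠ 0 := fun h => (hne0 1 (by decide)) ((hmemZ _).mp h)
    have hsqb : sq (j0 + 2) ≠ 0 := fun h => (hne0 2 (by decide)) ((hmemZ _).mp h)
    have hsqc : sq (j0 + 3) ≠ 0 := fun h => (hne0 3 (by decide)) ((hmemZ _).mp h)
    have hsqd : sq (j0 + 4) ≠ 0 := fun h => (hne0 4 (by decide)) ((hmemZ _).mp h)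
    have htane : ta ≠ 0 := fun h => hsqa (by rw [hta, h, zero_smul])
    have htbne : tb ≠ 0 := fun h => hsqb (by rw [htb, h, zero_smul])
    have htcne : tc ≠ 0 := fun h => hsqc (by rw [htc, h, zero_smul])
    have htdne : td ≠ 0 := fun h => hsqd (by rw [htd, h, zero_smul])
    have hspan : ⊤ ≤ Submodule.span F
        (Set.range ![e (j0 + 1), e (j0 + 2), e (j0 + 3), e (j0 + 4), sq (j0 + 1)]) := by
      rw [← Utop]
      apply Submodule.span_le.mpr
      have hej0 : e j0 ∈ Submodule.span F
          (Set.range ![e (j0 + 1), e (j0 + 2), e (j0 + 3), e (j0 + 4), sq (j0 + 1)]) := by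
        have hw : sq (j0 + 1) ∈ Submodule.span F
            (Set.range ![e (j0 + 1), e (j0 + 2), e (j0 + 3), e (j0 + 4), sq (j0 + 1)]) :=
          Submodule.subset_span ⟨4, rfl⟩
        have : e j0 = ta⁻¹ • sq (j0 + 1) := by
          rw [hta, smul_smul, inv_mul_cancel₀ htane, one_smul]
        rw [this]
        exact Submodule.smul_mem _ _ hw
      rintro u (⟨i, hi, rfl⟩ | ⟨i, hi, rfl⟩)
      · have hine : i ≠ j0 := fun h => (hi : sq i ≠ 0) ((hmemZ i).mpr h)
        rcases fin5_cases_aux j0 i hine with h | h | h | h <;> subst h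
        · exact Submodule.subset_span ⟨0, rfl⟩
        · exact Submodule.subset_span ⟨1, rfl⟩
        · exact Submodule.subset_span ⟨2, rfl⟩
        · exact Submodule.subset_span ⟨3, rfl⟩
      · obtain ⟨t, ht⟩ := hmul i
        rw [ht]
        exact Submodule.smul_mem _ _ hej0
    set b' := basisOfTopLeSpanOfCardEqFinrank _ hspan hcard with hb'def
    have hcoe : ⇑b' = ![e (j0 + 1), e (j0 + 2), e (j0 + 3), e (j0 + 4), sq (j0 + 1)] :=
      coe_basisOfTopLeSpanOfCardEqFinrank _ hspan hcard
    have hb0 : b' 0 = e (j0 + 1) := by rw [hcoe]; rfl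
    have hb1 : b' 1 = e (j0 + 2) := by rw [hcoe]; rfl
    have hb2 : b' 2 = e (j0 + 3) := by rw [hcoe]; rfl
    have hb3 : b' 3 = e (j0 + 4) := by rw [hcoe]; rfl
    have hb4 : b' 4 = sq (j0 + 1) := by rw [hcoe]; rfl
    have hprod : ∀ t : F, t ≠ 0 → ∀ i, sq i = t • e j0 →
        sq i = (t * ta⁻¹) • sq (j0 + 1) := by
      intro t htne i hti
      rw [hti, hta, smul_smul, mul_assoc, inv_mul_cancel₀ htane, mul_one]
    refine ⟨b', ?_, Or.inl ⟨tb * ta⁻¹, tc * ta⁻¹, td * ta⁻¹,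
      mul_ne_zero htbne (inv_ne_zero htane),
      mul_ne_zero htcne (inv_ne_zero htane),
      mul_ne_zero htdne (inv_ne_zero htane), ?_, ?_, ?_, ?_, ?_⟩⟩
    · refine offdiag_of_ten m hcomm ⇑b' ?_ ?_ ?_ ?_ ?_ ?_ ?_ ?_ ?_ ?_
      · rw [hb0, hb1]; exact hnat _ _ (hdist 1 2 (by decide))
      · rw [hb0, hb2]; exact hnat _ _ (hdist 1 3 (by decide))
      · rw [hb0, hb3]; exact hnat _ _ (hdist 1 4 (by decide))
      · rw [hb0, hb4]; exact hannR _ _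
      · rw [hb1, hb2]; exact hnat _ _ (hdist 2 3 (by decide))
      · rw [hb1, hb3]; exact hnat _ _ (hdist 2 4 (by decide))
      · rw [hb1, hb4]; exact hannR _ _
      · rw [hb2, hb3]; exact hnat _ _ (hdist 3 4 (by decide))
      · rw [hb2, hb4]; exact hannR _ _
      · rw [hb3, hb4]; exact hannR _ _
    · rw [hb0, hb4]
    · rw [hb1, hb4]
      show sq (j0 + 2) = (tb * ta⁻¹) • sq (j0 + 1)
      exact hprod tb htbne _ htb
    · rw [hb2, hb4]
      show sq (j0 + 3) = (tc * ta⁻¹) • sq (j0 + 1)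
      exact hprod tc htcne _ htc
    · rw [hb3, hb4]
      show sq (j0 + 4) = (td * ta⁻¹) • sq (j0 + 1)
      exact hprod td htdne _ htd
    · rw [hb4]; exact hannL _ _
end

section
/- Let N be a 5-dimensional nil power-associative evolution algebra over a field F of characteristic ≠ 2 which is indecomposable and not associative. Then N admits a natural basis (v_1, …, v_5) with v_1·v_1 = v_2 + v_3, v_2·v_2 = v_5, v_3·v_3 = −v_5, v_5·v_5 = 0, and one of the following holds: (a) v_4·v_4 = α·v_5 for some nonzero α ∈ F (the algebra N_{5,10}(α)); or (b) v_4·v_4 = α·(v_2 + v_3) for some nonzero α ∈ F (the algebra N_{5,11}(α)); or (c) v_4·v_4 = α·(v_2 + v_3) + β·v_5 for some nonzero α, β ∈ F (the algebra N_{5,12}(α,β)). -/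
section EvolutionAux
variable {F : Type*} [Field F] {A : Type*} [AddCommGroup A] [Module F A]
variable (m : A →ₗ[F] A →ₗ[F] A) (e : Module.Basis (Fin 5) F A)

lemma ev_mul_left (hnat : ∀ i j : Fin 5, i ≠ j → m (e i) (e j) = 0)
    (i : Fin 5) (x : A) : m (e i) x = e.repr x i • m (e i) (e i) := by
  conv_lhs => rw [← e.sum_repr x]
  rw [map_sum, Finset.sum_eq_single i]
  · rw [map_smul]
  · intro j _ hj
    rw [map_smul, hnat i j (fun h => hj h.symm), smul_zero]
  · intro h; exact absurd (Finset.mem_univ i) h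

variable (hcomm : ∀ x y : A, m x y = m y x)
variable (hnat : ∀ i j : Fin 5, i ≠ j → m (e i) (e j) = 0)
variable (h2 : (2:F) ≠ 0)
variable (hnil : ∀ a : A, ∃ k : ℕ, ppow m a k = 0)
variable (hpa : ∀ (a : A) (i j : ℕ), m (ppow m a i) (ppow m a j) = ppow m a (i + j + 1))

include hcomm hnat in
lemma ev_mul_sq_basis (i k : Fin 5) :
    m (m (e i) (e i)) (e k) = e.repr (m (e i) (e i)) k • m (e k) (e k) := by
  rw [hcomm, ev_mul_left m e hnat]

include hnat in
lemma ev_mul_repr (x y : A) :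
    m x y = ∑ i, (e.repr x i * e.repr y i) • m (e i) (e i) := by
  conv_lhs => rw [← e.sum_repr x]
  rw [map_sum, LinearMap.sum_apply]
  refine Finset.sum_congr rfl fun i _ => ?_
  rw [map_smul, LinearMap.smul_apply, ev_mul_left m e hnat i y, smul_smul]

include hcomm hnat hnil in
lemma ev_diag (i : Fin 5) :
    e.repr (m (e i) (e i)) i = 0 := by
  have hpow : ∀ n : ℕ, ppow m (e i) (n+1)
      = (e.repr (m (e i) (e i)) i) ^ n • m (e i) (e i) := by
    intro n; induction n with
    | zero => simp [ppow]
    | succ n ih =>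
      show m (ppow m (e i) (n+1)) (e i) = _
      rw [ih, map_smul, LinearMap.smul_apply,
        ev_mul_sq_basis m e hcomm hnat i i, smul_smul, ← pow_succ]
  obtain ⟨k, hk⟩ := hnil (e i)
  match k, hk with
  | 0, hk => exact absurd hk (e.ne_zero i)
  | (n+1), hk =>
    rw [hpow n] at hk
    rcases smul_eq_zero.mp hk with h | h
    · rcases pow_eq_zero_iff'.mp h with ⟨h0, _⟩; exact h0
    · rw [h, map_zero]; rfl

include hcomm hnat hnil hpa in
lemma ev_sq_self (i : Fin 5) : m (m (e i) (e i)) (m (e i) (e i)) = 0 := by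
  have h1 : ppow m (e i) 1 = m (e i) (e i) := rfl
  have hp2 : ppow m (e i) 2 = 0 := by
    show m (ppow m (e i) 1) (e i) = 0
    rw [h1, ev_mul_sq_basis m e hcomm hnat i i,
      ev_diag m e hcomm hnat hnil i, zero_smul]
  have hp3 : ppow m (e i) 3 = 0 := by
    show m (ppow m (e i) 2) (e i) = 0
    rw [hp2, map_zero]; rfl
  have := hpa (e i) 1 1
  rw [h1, hp3] at this
  exact this

include hcomm hnat h2 hnil hpa in
lemma ev_key {i j : Fin 5} (hij : i ≠ j) :
    m (m (e i) (e i)) (m (e j) (e j)) = 0 ∧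
    (e.repr (m (e i) (e i)) j * e.repr (m (e j) (e j)) i) •
      (m (e i) (e i) + m (e j) (e j)) = 0 := by
  have hii := ev_diag m e hcomm hnat hnil i
  have hjj := ev_diag m e hcomm hnat hnil j
  have hmsb := ev_mul_sq_basis m e hcomm hnat
  -- a = e i + e j
  have ha1 : ppow m (e i + e j) 1 = m (e i) (e i) + m (e j) (e j) := by
    show m (e i + e j) (e i + e j) = _
    simp [map_add, LinearMap.add_apply, hnat i j hij, hnat j i hij.symm]
  have ha2 : ppow m (e i + e j) 2
      = e.repr (m (e i) (e i)) j • m (e j) (e j)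
        + e.repr (m (e j) (e j)) i • m (e i) (e i) := by
    show m (ppow m (e i + e j) 1) (e i + e j) = _
    rw [ha1]
    simp only [map_add, map_sub, map_neg, map_smul, LinearMap.add_apply, LinearMap.sub_apply, LinearMap.neg_apply, LinearMap.smul_apply, hmsb, hii, hjj, zero_smul, smul_zero]
    module
  have ha3 : ppow m (e i + e j) 3
      = (e.repr (m (e i) (e i)) j * e.repr (m (e j) (e j)) i) •
        (m (e i) (e i) + m (e j) (e j)) := by
    show m (ppow m (e i + e j) 2) (e i + e j) = _
    rw [ha2]
    simp only [map_add, map_sub, map_neg, map_smul, LinearMap.add_apply, LinearMap.sub_apply, LinearMap.neg_apply, LinearMap.smul_apply, hmsb, hii, hjj, zero_smul, smul_zero, smul_smul]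
    try module
  -- b = e i - e j
  have hb1 : ppow m (e i - e j) 1 = m (e i) (e i) + m (e j) (e j) := by
    show m (e i - e j) (e i - e j) = _
    simp [map_sub, LinearMap.sub_apply, hnat i j hij, hnat j i hij.symm]
    try abel
  have hb2 : ppow m (e i - e j) 2
      = (- e.repr (m (e i) (e i)) j) • m (e j) (e j)
        + e.repr (m (e j) (e j)) i • m (e i) (e i) := by
    show m (ppow m (e i - e j) 1) (e i - e j) = _
    rw [hb1]
    simp only [map_add, map_sub, map_neg, map_smul, LinearMap.add_apply, LinearMap.sub_apply, LinearMap.neg_apply, LinearMap.smul_apply, hmsb, hii, hjj, zero_smul, smul_zero, neg_smul]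
    module
  have hb3 : ppow m (e i - e j) 3
      = (-(e.repr (m (e i) (e i)) j * e.repr (m (e j) (e j)) i)) •
        (m (e i) (e i) + m (e j) (e j)) := by
    show m (ppow m (e i - e j) 2) (e i - e j) = _
    rw [hb2]
    simp only [map_add, map_sub, map_neg, map_smul, LinearMap.add_apply, LinearMap.sub_apply, LinearMap.neg_apply, LinearMap.smul_apply, hmsb, hii, hjj, zero_smul, smul_zero, smul_smul, neg_smul]
    module
  have hA := hpa (e i + e j) 1 1
  have hB := hpa (e i - e j) 1 1
  rw [ha1, ha3] at hA
  rw [hb1, hb3] at hB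
  -- expand LHS of hA, hB
  have hsq : ∀ x y : A, m (x+y) (x+y) = m x x + m x y + (m y x + m y y) := by
    intro x y; simp [map_add, LinearMap.add_apply]; abel
  rw [hsq] at hA hB
  have hself_i := ev_sq_self m e hcomm hnat hnil hpa i
  have hself_j := ev_sq_self m e hcomm hnat hnil hpa j
  rw [hself_i, hself_j, hcomm (m (e j) (e j)) (m (e i) (e i))] at hA hB
  -- hA : 0 + X + (X + 0) = d • (...), hB : same LHS = -d • (...)
  have hX : (4:F) • m (m (e i) (e i)) (m (e j) (e j)) = 0 := by
    have h4 : (4:F) • m (m (e i) (e i)) (m (e j) (e j))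
        = (0 + m (m (e i) (e i)) (m (e j) (e j)) +
            (m (m (e i) (e i)) (m (e j) (e j)) + 0))
          + (0 + m (m (e i) (e i)) (m (e j) (e j)) +
            (m (m (e i) (e i)) (m (e j) (e j)) + 0)) := by
      module
    rw [h4]
    nth_rewrite 1 [hA]
    rw [hB]
    module
  have hX0 : m (m (e i) (e i)) (m (e j) (e j)) = 0 := by
    have h4 : (4:F) ≠ 0 := by
      have : (4:F) = 2 * 2 := by norm_num
      rw [this]; exact mul_ne_zero h2 h2
    exact (smul_eq_zero.mp hX).resolve_left h4
  refine ⟨hX0, ?_⟩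
  rw [← hA, hX0]
  simp

include hcomm hnat h2 hnil hpa in
lemma ev_no2 {i j : Fin 5} (hij : i ≠ j)
    (hcij : e.repr (m (e i) (e i)) j ≠ 0) : e.repr (m (e j) (e j)) i = 0 := by
  by_contra h
  have hd := (ev_key m e hcomm hnat h2 hnil hpa hij).2
  have hS : m (e i) (e i) + m (e j) (e j) = 0 :=
    (smul_eq_zero.mp hd).resolve_left (mul_ne_zero hcij h)
  have hsi : m (e i) (e i) = - m (e j) (e j) :=
    eq_neg_of_add_eq_zero_left hS
  have : e.repr (m (e i) (e i)) j = 0 := by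
    rw [hsi, map_neg]
    simp [ev_diag m e hcomm hnat hnil j]
  exact hcij this

include hcomm hnat h2 hnil hpa in
lemma ev_L5 {p q l : Fin 5} (hpq : p ≠ q) (hql : q ≠ l) (hlp : l ≠ p)
    (hcpq : e.repr (m (e p) (e p)) q ≠ 0)
    (hcql : e.repr (m (e q) (e q)) l ≠ 0) :
    m (e l) (e l) = 0 := by
  have hmsb := ev_mul_sq_basis m e hcomm hnat
  have hpp := ev_diag m e hcomm hnat hnil p
  have hqq := ev_diag m e hcomm hnat hnil q
  have hll := ev_diag m e hcomm hnat hnil l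
  have hcqp : e.repr (m (e q) (e q)) p = 0 := ev_no2 m e hcomm hnat h2 hnil hpa hpq hcpq
  have hclq : e.repr (m (e l) (e l)) q = 0 := ev_no2 m e hcomm hnat h2 hnil hpa hql hcql
  have h9 : m (m (e p) (e p) + m (e q) (e q) + m (e l) (e l))
      (m (e p) (e p) + m (e q) (e q) + m (e l) (e l)) = 0 := by
    simp only [map_add, LinearMap.add_apply,
      ev_sq_self m e hcomm hnat hnil hpa p,
      ev_sq_self m e hcomm hnat hnil hpa q,
      ev_sq_self m e hcomm hnat hnil hpa l,
      (ev_key m e hcomm hnat h2 hnil hpa hpq).1,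
      (ev_key m e hcomm hnat h2 hnil hpa hpq.symm).1,
      (ev_key m e hcomm hnat h2 hnil hpa hql).1,
      (ev_key m e hcomm hnat h2 hnil hpa hql.symm).1,
      (ev_key m e hcomm hnat h2 hnil hpa hlp).1,
      (ev_key m e hcomm hnat h2 hnil hpa hlp.symm).1]
    simp
  -- a = e p + e q + e l
  have ha1 : ppow m (e p + e q + e l) 1
      = m (e p) (e p) + m (e q) (e q) + m (e l) (e l) := by
    show m (e p + e q + e l) (e p + e q + e l) = _
    simp [map_add, LinearMap.add_apply, hnat p q hpq, hnat q p hpq.symm,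
      hnat q l hql, hnat l q hql.symm, hnat l p hlp, hnat p l hlp.symm]
    try abel
  have ha2 : ppow m (e p + e q + e l) 2
      = e.repr (m (e l) (e l)) p • m (e p) (e p)
        + e.repr (m (e p) (e p)) q • m (e q) (e q)
        + (e.repr (m (e p) (e p)) l + e.repr (m (e q) (e q)) l) • m (e l) (e l) := by
    show m (ppow m (e p + e q + e l) 1) (e p + e q + e l) = _
    rw [ha1]
    simp only [map_add, map_sub, map_neg, map_smul, LinearMap.add_apply,
      LinearMap.sub_apply, LinearMap.neg_apply, LinearMap.smul_apply,
      hmsb, hpp, hqq, hll, hcqp, hclq, zero_smul, smul_zero]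
    module
  have ha3 : ppow m (e p + e q + e l) 3
      = ((e.repr (m (e p) (e p)) l + e.repr (m (e q) (e q)) l)
            * e.repr (m (e l) (e l)) p) • m (e p) (e p)
        + (e.repr (m (e l) (e l)) p * e.repr (m (e p) (e p)) q) • m (e q) (e q)
        + ((e.repr (m (e l) (e l)) p * e.repr (m (e p) (e p)) l)
            + (e.repr (m (e p) (e p)) q * e.repr (m (e q) (e q)) l)) • m (e l) (e l) := by
    show m (ppow m (e p + e q + e l) 2) (e p + e q + e l) = _
    rw [ha2]
    simp only [map_add, map_sub, map_neg, map_smul, LinearMap.add_apply,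
      LinearMap.sub_apply, LinearMap.neg_apply, LinearMap.smul_apply,
      hmsb, hpp, hqq, hll, hcqp, hclq, zero_smul, smul_zero, smul_smul]
    module
  have hApos : ((e.repr (m (e p) (e p)) l + e.repr (m (e q) (e q)) l)
            * e.repr (m (e l) (e l)) p) • m (e p) (e p)
        + (e.repr (m (e l) (e l)) p * e.repr (m (e p) (e p)) q) • m (e q) (e q)
        + ((e.repr (m (e l) (e l)) p * e.repr (m (e p) (e p)) l)
            + (e.repr (m (e p) (e p)) q * e.repr (m (e q) (e q)) l)) • m (e l) (e l) = 0 := by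
    have hp3 := hpa (e p + e q + e l) 1 1
    norm_num at hp3
    rw [← ha3, ← hp3, ha1, h9]
  -- b = e p - e q - e l
  have hb1 : ppow m (e p - e q - e l) 1
      = m (e p) (e p) + m (e q) (e q) + m (e l) (e l) := by
    show m (e p - e q - e l) (e p - e q - e l) = _
    simp [map_add, map_sub, LinearMap.add_apply, LinearMap.sub_apply,
      hnat p q hpq, hnat q p hpq.symm,
      hnat q l hql, hnat l q hql.symm, hnat l p hlp, hnat p l hlp.symm]
    try abel
  have hb2 : ppow m (e p - e q - e l) 2
      = e.repr (m (e l) (e l)) p • m (e p) (e p)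
        - e.repr (m (e p) (e p)) q • m (e q) (e q)
        - (e.repr (m (e p) (e p)) l + e.repr (m (e q) (e q)) l) • m (e l) (e l) := by
    show m (ppow m (e p - e q - e l) 1) (e p - e q - e l) = _
    rw [hb1]
    simp only [map_add, map_sub, map_neg, map_smul, LinearMap.add_apply,
      LinearMap.sub_apply, LinearMap.neg_apply, LinearMap.smul_apply,
      hmsb, hpp, hqq, hll, hcqp, hclq, zero_smul, smul_zero]
    module
  have hb3 : ppow m (e p - e q - e l) 3
      = (-((e.repr (m (e p) (e p)) l + e.repr (m (e q) (e q)) l)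
            * e.repr (m (e l) (e l)) p)) • m (e p) (e p)
        + (-(e.repr (m (e l) (e l)) p * e.repr (m (e p) (e p)) q)) • m (e q) (e q)
        + ((-(e.repr (m (e l) (e l)) p * e.repr (m (e p) (e p)) l))
            + (e.repr (m (e p) (e p)) q * e.repr (m (e q) (e q)) l)) • m (e l) (e l) := by
    show m (ppow m (e p - e q - e l) 2) (e p - e q - e l) = _
    rw [hb2]
    simp only [map_add, map_sub, map_neg, map_smul, LinearMap.add_apply,
      LinearMap.sub_apply, LinearMap.neg_apply, LinearMap.smul_apply,
      hmsb, hpp, hqq, hll, hcqp, hclq, zero_smul, smul_zero, smul_smul]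
    module
  have hBpos : (-((e.repr (m (e p) (e p)) l + e.repr (m (e q) (e q)) l)
            * e.repr (m (e l) (e l)) p)) • m (e p) (e p)
        + (-(e.repr (m (e l) (e l)) p * e.repr (m (e p) (e p)) q)) • m (e q) (e q)
        + ((-(e.repr (m (e l) (e l)) p * e.repr (m (e p) (e p)) l))
            + (e.repr (m (e p) (e p)) q * e.repr (m (e q) (e q)) l)) • m (e l) (e l) = 0 := by
    have hp3 := hpa (e p - e q - e l) 1 1
    norm_num at hp3
    rw [← hb3, ← hp3, hb1, h9]
  have hz : ((2:F) * (e.repr (m (e p) (e p)) q * e.repr (m (e q) (e q)) l))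
      • m (e l) (e l) = 0 := by
    rw [show ((2:F) * (e.repr (m (e p) (e p)) q * e.repr (m (e q) (e q)) l))
        • m (e l) (e l)
      = (((e.repr (m (e p) (e p)) l + e.repr (m (e q) (e q)) l)
            * e.repr (m (e l) (e l)) p) • m (e p) (e p)
        + (e.repr (m (e l) (e l)) p * e.repr (m (e p) (e p)) q) • m (e q) (e q)
        + ((e.repr (m (e l) (e l)) p * e.repr (m (e p) (e p)) l)
            + (e.repr (m (e p) (e p)) q * e.repr (m (e q) (e q)) l)) • m (e l) (e l))
        + ((-((e.repr (m (e p) (e p)) l + e.repr (m (e q) (e q)) l)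
            * e.repr (m (e l) (e l)) p)) • m (e p) (e p)
        + (-(e.repr (m (e l) (e l)) p * e.repr (m (e p) (e p)) q)) • m (e q) (e q)
        + ((-(e.repr (m (e l) (e l)) p * e.repr (m (e p) (e p)) l))
            + (e.repr (m (e p) (e p)) q * e.repr (m (e q) (e q)) l)) • m (e l) (e l))
      from by module, hApos, hBpos, add_zero]
  exact (smul_eq_zero.mp hz).resolve_left
    (mul_ne_zero h2 (mul_ne_zero hcpq hcql))

end EvolutionAux


section R1
variable {F : Type*} [Field F] {A : Type*} [AddCommGroup A] [Module F A]
variable (m : A →ₗ[F] A →ₗ[F] A) (e : Module.Basis (Fin 5) F A)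

lemma fin5_cover0 {p q q' z r : Fin 5}
    (hpq : p ≠ q) (hpq' : p ≠ q') (hpz : p ≠ z) (hpr : p ≠ r)
    (hqq' : q ≠ q') (hqz : q ≠ z) (hqr : q ≠ r)
    (hq'z : q' ≠ z) (hq'r : q' ≠ r) (hzr : z ≠ r) :
    ∀ k : Fin 5, k = p ∨ k = q ∨ k = q' ∨ k = z ∨ k = r := by
  intro k
  by_contra hk
  push_neg at hk
  obtain ⟨h1, h2, h3, h4, h5⟩ := hk
  have hnd : ([k, p, q, q', z, r] : List (Fin 5)).Nodup := by
    simp [List.nodup_cons, h1, h2, h3, h4, h5, hpq, hpq', hpz, hpr, hqq',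
      hqz, hqr, hq'z, hq'r, hzr]
  have := List.Nodup.length_le_card hnd
  simp at this

lemma fin5_sum {p q q' z r : Fin 5}
    (hpq : p ≠ q) (hpq' : p ≠ q') (hpz : p ≠ z) (hpr : p ≠ r)
    (hqq' : q ≠ q') (hqz : q ≠ z) (hqr : q ≠ r)
    (hq'z : q' ≠ z) (hq'r : q' ≠ r) (hzr : z ≠ r)
    {M : Type*} [AddCommMonoid M] (f : Fin 5 → M) :
    ∑ k, f k = f p + f q + f q' + f z + f r := by
  have huniv : (Finset.univ : Finset (Fin 5)) = {p, q, q', z, r} := by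
    symm
    apply Finset.eq_univ_iff_forall.mpr
    intro x
    rcases fin5_cover0 hpq hpq' hpz hpr hqq' hqz hqr hq'z hq'r hzr x
      with h | h | h | h | h <;> simp [h]
  rw [huniv]
  rw [Finset.sum_insert (by simp [hpq, hpq', hpz, hpr]),
    Finset.sum_insert (by simp [hqq', hqz, hqr]),
    Finset.sum_insert (by simp [hq'z, hq'r]),
    Finset.sum_insert (by simp [hzr]),
    Finset.sum_singleton]
  abel

lemma caseR1core
    (hcomm : ∀ x y : A, m x y = m y x)
    (hnat : ∀ i j : Fin 5, i ≠ j → m (e i) (e j) = 0)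
    {p q q' o w : Fin 5}
    (hpq : p ≠ q) (hpq' : p ≠ q') (hpo : p ≠ o) (hpw : p ≠ w)
    (hqq' : q ≠ q') (hqo : q ≠ o) (hqw : q ≠ w)
    (hq'o : q' ≠ o) (hq'w : q' ≠ w) (how : o ≠ w)
    {b1 b2 po pw c c' : F}
    (hb1 : b1 ≠ 0) (hb2 : b2 ≠ 0) (hc : c ≠ 0)
    (hsp : m (e p) (e p) = b1 • e q + b2 • e q' + po • e o + pw • e w)
    (hu : m (e q) (e q) = c • e o + c' • e w)
    (hsov : m (e o) (e o) = 0)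
    (hswv : m (e w) (e w) = 0)
    (Hv : (b1^2) • m (e q) (e q) + (b2^2) • m (e q') (e q') = 0) :
    ∃ I J : Submodule F A,
      (∀ x ∈ I, ∀ y : A, m x y ∈ I) ∧ (∀ x ∈ J, ∀ y : A, m x y ∈ J) ∧
      I ≠ ⊥ ∧ J ≠ ⊥ ∧ IsCompl I J := by
  classical
  set G : Fin 4 → A :=
    ![e p, (c*b1) • e q + (c*pw - po*c') • e w, e q', m (e q) (e q)] with hG
  have hG0 : G 0 = e p := rfl
  have hG1 : G 1 = (c*b1) • e q + (c*pw - po*c') • e w := rfl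
  have hG2 : G 2 = e q' := rfl
  have hG3 : G 3 = m (e q) (e q) := rfl
  have hcb1 : c*b1 ≠ 0 := mul_ne_zero hc hb1
  refine ⟨Submodule.span F {(e w : A)}, Submodule.span F (Set.range G),
    ?_, ?_, ?_, ?_, ?_⟩
  · -- I ideal
    intro x hx y
    rcases Submodule.mem_span_singleton.mp hx with ⟨t, rfl⟩
    rw [map_smul, LinearMap.smul_apply, ev_mul_left m e hnat w y, hswv,
      smul_zero, smul_zero]
    exact Submodule.zero_mem _
  · -- J ideal
    have memG : ∀ i : Fin 4, G i ∈ Submodule.span F (Set.range G) :=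
      fun i => Submodule.subset_span ⟨i, rfl⟩
    have hsq' : m (e q') (e q') = ((b2^2)⁻¹ * (-(b1^2))) • m (e q) (e q) := by
      have h2 : (b2^2) • m (e q') (e q') = -((b1^2) • m (e q) (e q)) :=
        eq_neg_of_add_eq_zero_right Hv
      calc m (e q') (e q')
          = (b2^2)⁻¹ • ((b2^2) • m (e q') (e q')) := by
            rw [smul_smul, inv_mul_cancel₀ (pow_ne_zero 2 hb2), one_smul]
        _ = (b2^2)⁻¹ • (-((b1^2) • m (e q) (e q))) := by rw [h2]
        _ = ((b2^2)⁻¹ * (-(b1^2))) • m (e q) (e q) := by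
            rw [smul_neg, smul_smul]; match_scalars; ring
    have hspJ : m (e p) (e p) ∈ Submodule.span F (Set.range G) := by
      have hd : m (e p) (e p) = (1/c) • G 1 + b2 • G 2 + (po/c) • G 3 := by
        rw [hG1, hG2, hG3, hsp, hu]
        match_scalars <;> (try field_simp) <;> try ring
      rw [hd]
      exact Submodule.add_mem _ (Submodule.add_mem _
        (Submodule.smul_mem _ _ (memG 1)) (Submodule.smul_mem _ _ (memG 2)))
        (Submodule.smul_mem _ _ (memG 3))
    intro x _ y
    rw [hcomm, ev_mul_repr m e hnat y x,
      fin5_sum hpq hpq' hpo hpw hqq' hqo hqw hq'o hq'w how]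
    refine Submodule.add_mem _ (Submodule.add_mem _ (Submodule.add_mem _
      (Submodule.add_mem _ ?_ ?_) ?_) ?_) ?_
    · exact Submodule.smul_mem _ _ hspJ
    · exact Submodule.smul_mem _ _ (by rw [← hG3]; exact memG 3)
    · rw [hsq']
      exact Submodule.smul_mem _ _ (Submodule.smul_mem _ _
        (by rw [← hG3]; exact memG 3))
    · rw [hsov, smul_zero]; exact Submodule.zero_mem _
    · rw [hswv, smul_zero]; exact Submodule.zero_mem _
  · -- I ≠ ⊥
    rw [Submodule.ne_bot_iff]
    exact ⟨e w, Submodule.mem_span_singleton_self _, e.ne_zero w⟩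
  · -- J ≠ ⊥
    rw [Submodule.ne_bot_iff]
    refine ⟨e p, ?_, e.ne_zero p⟩
    rw [← hG0]; exact Submodule.subset_span ⟨0, rfl⟩
  · -- IsCompl
    have rsq : ∀ k : Fin 5, e.repr (m (e q) (e q)) k
        = c * (if o = k then 1 else 0) + c' * (if w = k then 1 else 0) := by
      intro k
      rw [hu]
      simp [Module.Basis.repr_self, Finsupp.single_apply]
    constructor
    · -- disjoint
      rw [disjoint_iff_inf_le]
      intro x hx
      rcases Submodule.mem_inf.mp hx with ⟨hxI, hxJ⟩
      rcases Submodule.mem_span_singleton.mp hxI with ⟨t, rfl⟩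
      rcases (Submodule.mem_span_range_iff_exists_fun F).mp hxJ with ⟨cv, hcv⟩
      rw [Fin.sum_univ_four, hG0, hG1, hG2, hG3] at hcv
      have ev : ∀ k : Fin 5,
          cv 0 * e.repr (e p) k
          + cv 1 * ((c*b1) * e.repr (e q) k + (c*pw - po*c') * e.repr (e w) k)
          + cv 2 * e.repr (e q') k
          + cv 3 * e.repr (m (e q) (e q)) k
          = t * e.repr (e w) k := by
        intro k
        have h := congrArg (fun v : A => e.repr v k) hcv
        simp only [map_add, map_smul, Finsupp.coe_add, Finsupp.coe_smul,
          Pi.add_apply, Pi.smul_apply, smul_eq_mul] at h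
        linear_combination h
      have hp' := ev p
      rw [rsq p] at hp'
      simp [Module.Basis.repr_self, Finsupp.single_apply, Ne.symm hpq, Ne.symm hpq',
        Ne.symm hpo, Ne.symm hpw] at hp'
      have hq'' := ev q
      rw [rsq q] at hq''
      simp [Module.Basis.repr_self, Finsupp.single_apply, hpq, Ne.symm hqq', hqq',
        Ne.symm hqo, Ne.symm hqw, hqo, hqw] at hq''
      have hcv1 : cv 1 = 0 := by
        rcases hq'' with h | h | h
        · exact h
        · exact absurd h hc
        · exact absurd h hb1
      have hq2 := ev q'
      rw [rsq q'] at hq2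
      simp [Module.Basis.repr_self, Finsupp.single_apply, hpq', hqq', Ne.symm hq'o,
        Ne.symm hq'w] at hq2
      have ho' := ev o
      rw [rsq o] at ho'
      simp [Module.Basis.repr_self, Finsupp.single_apply, hpo, hqo, hq'o, how,
        Ne.symm how, hp', hcv1, hq2] at ho'
      have hcv3 : cv 3 = 0 := by
        rcases ho' with h | h
        · exact h
        · exact absurd h hc
      rw [hp', hcv1, hq2, hcv3] at hcv
      simp only [zero_smul, smul_zero, zero_add, add_zero] at hcv
      rw [← hcv]
      exact Submodule.zero_mem _
    · -- codisjoint
      rw [codisjoint_iff, eq_top_iff, ← e.span_eq]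
      refine Submodule.span_le.mpr ?_
      rintro _ ⟨k, rfl⟩
      have hIle : Submodule.span F {(e w : A)}
          ≤ Submodule.span F {(e w : A)} ⊔ Submodule.span F (Set.range G) :=
        le_sup_left
      have hJle : Submodule.span F (Set.range G)
          ≤ Submodule.span F {(e w : A)} ⊔ Submodule.span F (Set.range G) :=
        le_sup_right
      have memG : ∀ i : Fin 4, G i ∈ Submodule.span F {(e w : A)}
          ⊔ Submodule.span F (Set.range G) :=
        fun i => hJle (Submodule.subset_span ⟨i, rfl⟩)
      have hew : e w ∈ Submodule.span F {(e w : A)}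
          ⊔ Submodule.span F (Set.range G) :=
        hIle (Submodule.mem_span_singleton_self _)
      have hep : e p ∈ _ := memG 0
      have heq' : e q' ∈ _ := memG 2
      have heq : e q ∈ Submodule.span F {(e w : A)}
          ⊔ Submodule.span F (Set.range G) := by
        have hd : e q = (c*b1)⁻¹ • (G 1 - (c*pw - po*c') • e w) := by
          rw [hG1]
          match_scalars
          · field_simp
          · field_simp; ring
        rw [hd]
        exact Submodule.smul_mem _ _ (Submodule.sub_mem _ (memG 1)
          (Submodule.smul_mem _ _ hew))
      have heo : e o ∈ Submodule.span F {(e w : A)}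
          ⊔ Submodule.span F (Set.range G) := by
        have hd : e o = c⁻¹ • (G 3 - c' • e w) := by
          rw [hG3, hu]
          match_scalars
          · field_simp
          · field_simp; ring
        rw [hd]
        exact Submodule.smul_mem _ _ (Submodule.sub_mem _ (memG 3)
          (Submodule.smul_mem _ _ hew))
      rcases fin5_cover0 hpq hpq' hpo hpw hqq' hqo hqw hq'o hq'w how k
        with h | h | h | h | h <;> rw [h]
      · exact hep
      · exact heq
      · exact heq'
      · exact heo
      · exact hew
end R1

section R23
variable {F : Type*} [Field F] {A : Type*} [AddCommGroup A] [Module F A]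
variable (m : A →ₗ[F] A →ₗ[F] A) (e : Module.Basis (Fin 5) F A)

lemma caseR3 (hcomm : ∀ x y : A, m x y = m y x)
    (hnat : ∀ i j : Fin 5, i ≠ j → m (e i) (e j) = 0)
    {p q q' z r : Fin 5}
    (hpq : p ≠ q) (hpq' : p ≠ q') (hpz : p ≠ z) (hpr : p ≠ r)
    (hqq' : q ≠ q') (hqz : q ≠ z) (hqr : q ≠ r)
    (hq'z : q' ≠ z) (hq'r : q' ≠ r) (hzr : z ≠ r)
    {b1 b2 d1 b1' b2' d2 μ1 μ2 : F}
    (hb1 : b1 ≠ 0) (hb2 : b2 ≠ 0) (hμ1 : μ1 ≠ 0) (hμ2 : μ2 ≠ 0)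
    (hsp : m (e p) (e p) = b1 • e q + b2 • e q' + d1 • e z)
    (hsqv : m (e q) (e q) = μ1 • e z)
    (hsq'v : m (e q') (e q') = μ2 • e z)
    (hsrv : m (e r) (e r) = b1' • e q + b2' • e q' + d2 • e z)
    (hszv : m (e z) (e z) = 0)
    (hsrne : m (e r) (e r) ≠ 0)
    (H1 : μ1*b1^2 + μ2*b2^2 = 0)
    (H2 : μ1*b1*b1' + μ2*b2*b2' = 0) :
    ∃ v : Module.Basis (Fin 5) F A,
      (∀ i j : Fin 5, i ≠ j → m (v i) (v j) = 0) ∧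
      m (v 0) (v 0) = v 1 + v 2 ∧
      m (v 1) (v 1) = v 4 ∧
      m (v 2) (v 2) = -v 4 ∧
      m (v 4) (v 4) = 0 ∧
      ((∃ α : F, α ≠ 0 ∧ m (v 3) (v 3) = α • v 4) ∨
       (∃ α : F, α ≠ 0 ∧ m (v 3) (v 3) = α • (v 1 + v 2)) ∨
       (∃ α β : F, α ≠ 0 ∧ β ≠ 0 ∧
          m (v 3) (v 3) = α • (v 1 + v 2) + β • v 4)) := by
  classical
  have hQ0 : μ2*b2^2 ≠ 0 := mul_ne_zero hμ2 (pow_ne_zero _ hb2)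
  set V : Fin 5 → A := ![e p,
    b2 • e q',
    b1 • e q + d1 • e z,
    e r,
    (μ2*b2^2) • e z] with hV
  have hV0 : V 0 = e p := rfl
  have hV1 : V 1 = b2 • e q' := rfl
  have hV2 : V 2 = b1 • e q + d1 • e z := rfl
  have hV3 : V 3 = e r := rfl
  have hV4 : V 4 = (μ2*b2^2) • e z := rfl
  have n1 := hnat p q hpq
  have n3 := hnat p q' hpq'
  have n5 := hnat p z hpz
  have n7 := hnat p r hpr
  have n9 := hnat q q' hqq'
  have n10 := hnat q' q hqq'.symm
  have n11 := hnat q z hqz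
  have n12 := hnat z q hqz.symm
  have n13 := hnat q r hqr
  have n15 := hnat q' z hq'z
  have n16 := hnat z q' hq'z.symm
  have n17 := hnat q' r hq'r
  have n20 := hnat r z hzr.symm
  have n14 := hnat r q hqr.symm
  have n18 := hnat r q' hq'r.symm
  have n19 := hnat z r hzr
  -- products
  have P00 : m (V 0) (V 0) = V 1 + V 2 := by
    rw [hV0, hV1, hV2, hsp]; module
  have P11 : m (V 1) (V 1) = V 4 := by
    rw [hV1, hV4]
    simp only [map_smul, LinearMap.smul_apply, hsq'v]
    match_scalars; ring
  have P22 : m (V 2) (V 2) = -V 4 := by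
    rw [hV2, hV4]
    simp only [map_add, map_smul, LinearMap.add_apply, LinearMap.smul_apply,
      n11, n12, hsqv, hszv, smul_zero, add_zero, zero_add]
    match_scalars
    linear_combination H1
  have P12 : m (V 1) (V 2) = 0 := by
    rw [hV1, hV2]
    simp only [map_add, map_smul, LinearMap.add_apply, LinearMap.smul_apply,
      n10, n15, smul_zero, add_zero]
  have P44 : m (V 4) (V 4) = 0 := by
    rw [hV4]
    simp only [map_smul, LinearMap.smul_apply, hszv, smul_zero]
  have P01 : m (V 0) (V 1) = 0 := by
    rw [hV0, hV1]
    simp only [map_smul, n3, smul_zero]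
  have P02 : m (V 0) (V 2) = 0 := by
    rw [hV0, hV2]
    simp only [map_add, map_smul, n1, n5, smul_zero, add_zero]
  have P03 : m (V 0) (V 3) = 0 := by
    rw [hV0, hV3]; exact n7
  have P04 : m (V 0) (V 4) = 0 := by
    rw [hV0, hV4]
    simp only [map_smul, n5, smul_zero]
  have P13 : m (V 1) (V 3) = 0 := by
    rw [hV1, hV3]
    simp only [map_smul, LinearMap.smul_apply, n17, smul_zero]
  have P14 : m (V 1) (V 4) = 0 := by
    rw [hV1, hV4]
    simp only [map_smul, LinearMap.smul_apply, n15, smul_zero]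
  have P23 : m (V 2) (V 3) = 0 := by
    rw [hV2, hV3]
    simp only [map_add, map_smul, LinearMap.add_apply, LinearMap.smul_apply,
      n13, n19, smul_zero, add_zero]
  have P24 : m (V 2) (V 4) = 0 := by
    rw [hV2, hV4]
    simp only [map_add, map_smul, LinearMap.add_apply, LinearMap.smul_apply,
      n11, hszv, smul_zero, add_zero]
  have P34 : m (V 3) (V 4) = 0 := by
    rw [hV3, hV4]
    simp only [map_smul, n20, smul_zero]
  -- spanning
  have hcover := fin5_cover0 hpq hpq' hpz hpr hqq' hqz hqr hq'z hq'r hzr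
  have hspan : ⊤ ≤ Submodule.span F (Set.range V) := by
    rw [← e.span_eq]
    refine Submodule.span_le.mpr ?_
    rintro _ ⟨k, rfl⟩
    have memV : ∀ i : Fin 5, V i ∈ Submodule.span F (Set.range V) :=
      fun i => Submodule.subset_span ⟨i, rfl⟩
    have hep : e p ∈ Submodule.span F (Set.range V) := by
      rw [← hV0]; exact memV 0
    have her : e r ∈ Submodule.span F (Set.range V) := by
      rw [← hV3]; exact memV 3
    have hez : e z ∈ Submodule.span F (Set.range V) := by
      have h : e z = (μ2*b2^2)⁻¹ • V 4 := by
        rw [hV4, smul_smul, inv_mul_cancel₀ hQ0, one_smul]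
      rw [h]; exact Submodule.smul_mem _ _ (memV 4)
    have heq' : e q' ∈ Submodule.span F (Set.range V) := by
      have h : e q' = b2⁻¹ • V 1 := by
        rw [hV1, smul_smul, inv_mul_cancel₀ hb2, one_smul]
      rw [h]; exact Submodule.smul_mem _ _ (memV 1)
    have heq : e q ∈ Submodule.span F (Set.range V) := by
      have h : e q = b1⁻¹ • (V 2 - d1 • e z) := by
        rw [hV2]
        match_scalars
        · field_simp
        · field_simp; ring
      rw [h]
      exact Submodule.smul_mem _ _ (Submodule.sub_mem _ (memV 2)
        (Submodule.smul_mem _ _ hez))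
    rcases hcover k with h | h | h | h | h <;> rw [h]
    · exact hep
    · exact heq
    · exact heq'
    · exact hez
    · exact her
  haveI : FiniteDimensional F A := Module.Finite.of_basis e
  have hcard : Fintype.card (Fin 5) = Module.finrank F A := by
    rw [Module.finrank_eq_card_basis e]
  refine ⟨basisOfTopLeSpanOfCardEqFinrank V hspan hcard, ?_⟩
  rw [show ⇑(basisOfTopLeSpanOfCardEqFinrank V hspan hcard) = V from
    coe_basisOfTopLeSpanOfCardEqFinrank V hspan hcard]
  refine ⟨?_, P00, P11, P22, P44, ?_⟩
  · intro i j hij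
    fin_cases i <;> fin_cases j <;>
      first
        | exact absurd rfl hij
        | exact P01 | exact P02 | exact P03 | exact P04
        | exact P12 | exact P13 | exact P14
        | exact P23 | exact P24 | exact P34
        | (rw [hcomm]; first
            | exact P01 | exact P02 | exact P03 | exact P04
            | exact P12 | exact P13 | exact P14
            | exact P23 | exact P24 | exact P34)
  · -- the v4 = V 3 cases
    by_cases hb2' : b2' = 0
    · -- case (a) : N_{5,10}
      have hb1' : b1' = 0 := by
        have h0 : (μ1*b1) * b1' = 0 := by
          linear_combination H2 - (μ2*b2)*hb2'
        exact (mul_eq_zero.mp h0).resolve_left (mul_ne_zero hμ1 hb1)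
      have hd2 : d2 ≠ 0 := by
        intro h0
        apply hsrne
        rw [hsrv, hb1', hb2', h0]
        simp
      left
      refine ⟨d2 / (μ2*b2^2), div_ne_zero hd2 hQ0, ?_⟩
      rw [hV3, hV4, hsrv, hb1', hb2']
      match_scalars <;> field_simp
    · -- cases (b), (c)
      have hb1'eq : b1' * b2 = b1 * b2' := by
        have hμb : μ1 * b1 ≠ 0 := mul_ne_zero hμ1 hb1
        have h0 : (μ1*b1) * (b1' * b2 - b1 * b2') = 0 := by
          linear_combination b2 * H2 - b2' * H1
        rcases mul_eq_zero.mp h0 with h | h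
        · exact absurd h hμb
        · linear_combination h
      by_cases hbet : d2 - (b2'/b2)*d1 = 0
      · -- case (b) : N_{5,11}
        right; left
        refine ⟨b2'/b2, div_ne_zero hb2' hb2, ?_⟩
        rw [hV3, hsrv, hV1, hV2]
        match_scalars
        · field_simp; linear_combination hb1'eq
        · field_simp
        · linear_combination hbet
      · -- case (c) : N_{5,12}
        right; right
        refine ⟨b2'/b2, (d2 - (b2'/b2)*d1) / (μ2*b2^2),
          div_ne_zero hb2' hb2, div_ne_zero hbet hQ0, ?_⟩
        rw [hV3, hsrv, hV1, hV2, hV4]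
        match_scalars
        · field_simp; linear_combination hb1'eq
        · field_simp
        · field_simp; ring

lemma caseR2 (hcomm : ∀ x y : A, m x y = m y x)
    (hnat : ∀ i j : Fin 5, i ≠ j → m (e i) (e j) = 0)
    {p q q' z r : Fin 5}
    (hpq : p ≠ q) (hpq' : p ≠ q') (hpz : p ≠ z) (hpr : p ≠ r)
    (hqq' : q ≠ q') (hqz : q ≠ z) (hqr : q ≠ r)
    (hq'z : q' ≠ z) (hq'r : q' ≠ r) (hzr : z ≠ r)
    {b1 b2 b3 d μ1 μ2 μ3 : F}
    (hb1 : b1 ≠ 0) (hb2 : b2 ≠ 0) (hb3 : b3 ≠ 0)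
    (hμ1 : μ1 ≠ 0) (hμ2 : μ2 ≠ 0) (hμ3 : μ3 ≠ 0)
    (hsp : m (e p) (e p) = b1 • e q + b2 • e q' + b3 • e r + d • e z)
    (hsqv : m (e q) (e q) = μ1 • e z)
    (hsq'v : m (e q') (e q') = μ2 • e z)
    (hsrv : m (e r) (e r) = μ3 • e z)
    (hszv : m (e z) (e z) = 0)
    (H1 : μ1*b1^2 + μ2*b2^2 + μ3*b3^2 = 0) :
    ∃ v : Module.Basis (Fin 5) F A,
      (∀ i j : Fin 5, i ≠ j → m (v i) (v j) = 0) ∧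
      m (v 0) (v 0) = v 1 + v 2 ∧
      m (v 1) (v 1) = v 4 ∧
      m (v 2) (v 2) = -v 4 ∧
      m (v 4) (v 4) = 0 ∧
      ((∃ α : F, α ≠ 0 ∧ m (v 3) (v 3) = α • v 4) ∨
       (∃ α : F, α ≠ 0 ∧ m (v 3) (v 3) = α • (v 1 + v 2)) ∨
       (∃ α β : F, α ≠ 0 ∧ β ≠ 0 ∧
          m (v 3) (v 3) = α • (v 1 + v 2) + β • v 4)) := by
  classical
  have hQ0 : μ2*b2^2 + μ3*b3^2 ≠ 0 := by
    intro h0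
    have : μ1*b1^2 = 0 := by linear_combination H1 - h0
    rcases mul_eq_zero.mp this with h | h
    · exact hμ1 h
    · exact pow_ne_zero _ hb1 h
  set V : Fin 5 → A := ![e p,
    b2 • e q' + b3 • e r,
    b1 • e q + d • e z,
    (μ3*b3) • e q' - (μ2*b2) • e r,
    (μ2*b2^2 + μ3*b3^2) • e z] with hV
  have hV0 : V 0 = e p := rfl
  have hV1 : V 1 = b2 • e q' + b3 • e r := rfl
  have hV2 : V 2 = b1 • e q + d • e z := rfl
  have hV3 : V 3 = (μ3*b3) • e q' - (μ2*b2) • e r := rfl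
  have hV4 : V 4 = (μ2*b2^2 + μ3*b3^2) • e z := rfl
  have n1 := hnat p q hpq
  have n3 := hnat p q' hpq'
  have n5 := hnat p z hpz
  have n7 := hnat p r hpr
  have n9 := hnat q q' hqq'
  have n10 := hnat q' q hqq'.symm
  have n11 := hnat q z hqz
  have n12 := hnat z q hqz.symm
  have n13 := hnat q r hqr
  have n14 := hnat r q hqr.symm
  have n15 := hnat q' z hq'z
  have n16 := hnat z q' hq'z.symm
  have n17 := hnat q' r hq'r
  have n18 := hnat r q' hq'r.symm
  have n19 := hnat z r hzr
  have n20 := hnat r z hzr.symm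
  have P00 : m (V 0) (V 0) = V 1 + V 2 := by
    rw [hV0, hV1, hV2, hsp]; module
  have P11 : m (V 1) (V 1) = V 4 := by
    rw [hV1, hV4]
    simp only [map_add, map_smul, LinearMap.add_apply, LinearMap.smul_apply,
      n17, n18, hsq'v, hsrv, smul_zero, add_zero, zero_add]
    match_scalars; ring
  have P22 : m (V 2) (V 2) = -V 4 := by
    rw [hV2, hV4]
    simp only [map_add, map_smul, LinearMap.add_apply, LinearMap.smul_apply,
      n11, n12, hsqv, hszv, smul_zero, add_zero, zero_add]
    match_scalars
    linear_combination H1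
  have P12 : m (V 1) (V 2) = 0 := by
    rw [hV1, hV2]
    simp only [map_add, map_smul, LinearMap.add_apply, LinearMap.smul_apply,
      n10, n14, n15, n20, smul_zero, add_zero, zero_add]
  have P33 : m (V 3) (V 3) = (μ2*μ3) • V 4 := by
    rw [hV3, hV4]
    simp only [map_add, map_sub, map_smul, LinearMap.add_apply,
      LinearMap.sub_apply, LinearMap.smul_apply,
      n17, n18, hsq'v, hsrv, smul_zero, add_zero, zero_add, sub_zero, zero_sub]
    match_scalars; ring
  have P44 : m (V 4) (V 4) = 0 := by
    rw [hV4]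
    simp only [map_smul, LinearMap.smul_apply, hszv, smul_zero]
  have P01 : m (V 0) (V 1) = 0 := by
    rw [hV0, hV1]
    simp only [map_add, map_smul, n3, n7, smul_zero, add_zero]
  have P02 : m (V 0) (V 2) = 0 := by
    rw [hV0, hV2]
    simp only [map_add, map_smul, n1, n5, smul_zero, add_zero]
  have P03 : m (V 0) (V 3) = 0 := by
    rw [hV0, hV3]
    simp only [map_sub, map_smul, n3, n7, smul_zero, sub_zero]
  have P04 : m (V 0) (V 4) = 0 := by
    rw [hV0, hV4]
    simp only [map_smul, n5, smul_zero]
  have P13 : m (V 1) (V 3) = 0 := by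
    rw [hV1, hV3]
    simp only [map_add, map_sub, map_smul, LinearMap.add_apply,
      LinearMap.sub_apply, LinearMap.smul_apply,
      n17, n18, hsq'v, hsrv, smul_zero, add_zero, zero_add, sub_zero, zero_sub]
    match_scalars; ring
  have P14 : m (V 1) (V 4) = 0 := by
    rw [hV1, hV4]
    simp only [map_add, map_smul, LinearMap.add_apply, LinearMap.smul_apply,
      n15, n20, smul_zero, add_zero]
  have P23 : m (V 2) (V 3) = 0 := by
    rw [hV2, hV3]
    simp only [map_add, map_sub, map_smul, LinearMap.add_apply,
      LinearMap.sub_apply, LinearMap.smul_apply,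
      n9, n13, n16, n19, smul_zero, add_zero, sub_zero, smul_neg, neg_zero]
  have P24 : m (V 2) (V 4) = 0 := by
    rw [hV2, hV4]
    simp only [map_add, map_smul, LinearMap.add_apply, LinearMap.smul_apply,
      n11, hszv, smul_zero, add_zero]
  have P34 : m (V 3) (V 4) = 0 := by
    rw [hV3, hV4]
    simp only [map_sub, map_smul, LinearMap.sub_apply, LinearMap.smul_apply,
      n15, n20, smul_zero, sub_zero]
  have hcover := fin5_cover0 hpq hpq' hpz hpr hqq' hqz hqr hq'z hq'r hzr
  have hspan : ⊤ ≤ Submodule.span F (Set.range V) := by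
    rw [← e.span_eq]
    refine Submodule.span_le.mpr ?_
    rintro _ ⟨k, rfl⟩
    have memV : ∀ i : Fin 5, V i ∈ Submodule.span F (Set.range V) :=
      fun i => Submodule.subset_span ⟨i, rfl⟩
    have hep : e p ∈ Submodule.span F (Set.range V) := by
      rw [← hV0]; exact memV 0
    have hez : e z ∈ Submodule.span F (Set.range V) := by
      have h : e z = (μ2*b2^2 + μ3*b3^2)⁻¹ • V 4 := by
        rw [hV4, smul_smul, inv_mul_cancel₀ hQ0, one_smul]
      rw [h]; exact Submodule.smul_mem _ _ (memV 4)
    have heq : e q ∈ Submodule.span F (Set.range V) := by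
      have h : e q = b1⁻¹ • (V 2 - d • e z) := by
        rw [hV2]
        match_scalars <;> field_simp <;> ring
      rw [h]
      exact Submodule.smul_mem _ _ (Submodule.sub_mem _ (memV 2)
        (Submodule.smul_mem _ _ hez))
    have heq' : e q' ∈ Submodule.span F (Set.range V) := by
      have h : e q' = (μ2*b2^2 + μ3*b3^2)⁻¹ • ((μ2*b2) • V 1 + b3 • V 3) := by
        rw [hV1, hV3]
        match_scalars
        · field_simp
        · field_simp; ring
      rw [h]
      exact Submodule.smul_mem _ _ (Submodule.add_mem _
        (Submodule.smul_mem _ _ (memV 1)) (Submodule.smul_mem _ _ (memV 3)))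
    have her : e r ∈ Submodule.span F (Set.range V) := by
      have h : e r = b3⁻¹ • (V 1 - b2 • e q') := by
        rw [hV1]
        match_scalars <;> field_simp <;> ring
      rw [h]
      exact Submodule.smul_mem _ _ (Submodule.sub_mem _ (memV 1)
        (Submodule.smul_mem _ _ heq'))
    rcases hcover k with h | h | h | h | h <;> rw [h]
    · exact hep
    · exact heq
    · exact heq'
    · exact hez
    · exact her
  haveI : FiniteDimensional F A := Module.Finite.of_basis e
  have hcard : Fintype.card (Fin 5) = Module.finrank F A := by
    rw [Module.finrank_eq_card_basis e]
  refine ⟨basisOfTopLeSpanOfCardEqFinrank V hspan hcard, ?_⟩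
  rw [show ⇑(basisOfTopLeSpanOfCardEqFinrank V hspan hcard) = V from
    coe_basisOfTopLeSpanOfCardEqFinrank V hspan hcard]
  refine ⟨?_, P00, P11, P22, P44, ?_⟩
  · intro i j hij
    fin_cases i <;> fin_cases j <;>
      first
        | exact absurd rfl hij
        | exact P01 | exact P02 | exact P03 | exact P04
        | exact P12 | exact P13 | exact P14
        | exact P23 | exact P24 | exact P34
        | (rw [hcomm]; first
            | exact P01 | exact P02 | exact P03 | exact P04
            | exact P12 | exact P13 | exact P14
            | exact P23 | exact P24 | exact P34)
  · exact Or.inl ⟨μ2*μ3, mul_ne_zero hμ2 hμ3, P33⟩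
end R23
section Main
variable {F : Type*} [Field F] {A : Type*} [AddCommGroup A] [Module F A]

theorem nil_pa_nonassoc_indecomposable_dim5_classification'
    (h2 : (2 : F) ≠ 0)
    (m : A →ₗ[F] A →ₗ[F] A) (hcomm : ∀ x y : A, m x y = m y x)
    (e : Module.Basis (Fin 5) F A)
    (hnat : ∀ i j : Fin 5, i ≠ j → m (e i) (e j) = 0)
    (hnil : ∀ a : A, ∃ k : ℕ, ppow m a k = 0)
    (hpa : ∀ (a : A) (i j : ℕ),
      m (ppow m a i) (ppow m a j) = ppow m a (i + j + 1))
    (hnotassoc : ¬ ∀ x y z : A, m (m x y) z = m x (m y z))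
    (hindec : ¬ ∃ I J : Submodule F A,
      (∀ x ∈ I, ∀ y : A, m x y ∈ I) ∧ (∀ x ∈ J, ∀ y : A, m x y ∈ J) ∧
      I ≠ ⊥ ∧ J ≠ ⊥ ∧ IsCompl I J) :
    ∃ v : Module.Basis (Fin 5) F A,
      (∀ i j : Fin 5, i ≠ j → m (v i) (v j) = 0) ∧
      m (v 0) (v 0) = v 1 + v 2 ∧
      m (v 1) (v 1) = v 4 ∧
      m (v 2) (v 2) = -v 4 ∧
      m (v 4) (v 4) = 0 ∧
      ((∃ α : F, α ≠ 0 ∧ m (v 3) (v 3) = α • v 4) ∨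
       (∃ α : F, α ≠ 0 ∧ m (v 3) (v 3) = α • (v 1 + v 2)) ∨
       (∃ α β : F, α ≠ 0 ∧ β ≠ 0 ∧
          m (v 3) (v 3) = α • (v 1 + v 2) + β • v 4)) := by
  classical
  -- Step 1: nonassociativity witness
  obtain ⟨p, q, hcpq, hsqne⟩ :
      ∃ p q : Fin 5, e.repr (m (e p) (e p)) q ≠ 0 ∧ m (e q) (e q) ≠ 0 := by
    by_contra hno
    push_neg at hno
    apply hnotassoc
    have hck : ∀ i k : Fin 5, e.repr (m (e i) (e i)) k • m (e k) (e k) = 0 := by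
      intro i k
      by_cases h : e.repr (m (e i) (e i)) k = 0
      · rw [h, zero_smul]
      · rw [hno i k h, smul_zero]
    have key : ∀ x y z : A, m (m x y) z = 0 := by
      intro x y z
      have hrepr : ∀ k, e.repr (m x y) k
          = ∑ i, (e.repr x i * e.repr y i) * e.repr (m (e i) (e i)) k := by
        intro k
        conv_lhs => rw [ev_mul_repr m e hnat x y]
        simp [map_sum, Finsupp.coe_finset_sum, Finset.sum_apply, map_smul,
          Finsupp.coe_smul, Pi.smul_apply, smul_eq_mul]
      rw [ev_mul_repr m e hnat (m x y) z]
      refine Finset.sum_eq_zero fun k _ => ?_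
      rw [hrepr k, Finset.sum_mul, Finset.sum_smul]
      refine Finset.sum_eq_zero fun i _ => ?_
      rw [show (e.repr x i * e.repr y i) * e.repr (m (e i) (e i)) k * e.repr z k
          = (e.repr x i * e.repr y i * e.repr z k) * e.repr (m (e i) (e i)) k
          from by ring, mul_smul, hck i k, smul_zero]
    intro x y z
    rw [key, hcomm x (m y z), key]
  have hpq : p ≠ q := by
    intro h
    subst h
    exact hcpq (ev_diag m e hcomm hnat hnil p)
  have hspne : m (e p) (e p) ≠ 0 := by
    intro h
    apply hcpq
    rw [h, map_zero]
    rfl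
  -- Step 2: rows of "middle layer" vertices point into the annihilator
  have Hrow : ∀ a b : Fin 5, a ≠ b → e.repr (m (e a) (e a)) b ≠ 0 →
      ∀ k, e.repr (m (e b) (e b)) k ≠ 0 → m (e k) (e k) = 0 := by
    intro a b hab hcab k hk
    have hkb : k ≠ b := by
      intro h
      subst h
      exact hk (ev_diag m e hcomm hnat hnil k)
    have hka : k ≠ a := by
      intro h
      subst h
      exact hk (ev_no2 m e hcomm hnat h2 hnil hpa hab hcab)
    exact ev_L5 m e hcomm hnat h2 hnil hpa hab (Ne.symm hkb) hka hcab hk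
  -- Step 3: a partner column
  obtain ⟨q', hq'q, hq'p, hcpq', hsq'ne⟩ :
      ∃ q', q' ≠ q ∧ q' ≠ p ∧ e.repr (m (e p) (e p)) q' ≠ 0 ∧
        m (e q') (e q') ≠ 0 := by
    by_contra hno
    push_neg at hno
    have hss := ev_sq_self m e hcomm hnat hnil hpa p
    rw [ev_mul_repr m e hnat] at hss
    rw [Finset.sum_eq_single q] at hss
    · exact hsqne ((smul_eq_zero.mp hss).resolve_left (mul_ne_zero hcpq hcpq))
    · intro k _ hkq
      by_cases hkp : k = p
      · subst hkp
        rw [ev_diag m e hcomm hnat hnil k]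
        simp
      · by_cases hck : e.repr (m (e p) (e p)) k = 0
        · rw [hck]; simp
        · rw [hno k hkq hkp hck, smul_zero]
    · intro h
      exact absurd (Finset.mem_univ q) h
  have hqq' : q ≠ q' := Ne.symm hq'q
  have hpq' : p ≠ q' := Ne.symm hq'p
  -- Step 4: a z-coordinate
  obtain ⟨z, hcqz⟩ : ∃ z, e.repr (m (e q) (e q)) z ≠ 0 := by
    by_contra h
    push_neg at h
    apply hsqne
    apply e.repr.map_eq_zero_iff.mp
    exact Finsupp.ext h
  have hszv : m (e z) (e z) = 0 := Hrow p q hpq hcpq z hcqz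
  have hpz : p ≠ z := by
    intro h; rw [h] at hspne; exact hspne hszv
  have hqz : q ≠ z := by
    intro h; rw [h] at hsqne; exact hsqne hszv
  have hq'z : q' ≠ z := by
    intro h; rw [h] at hsq'ne; exact hsq'ne hszv
  -- Step 5: the fifth index
  obtain ⟨r, hrp, hrq, hrq', hrz⟩ :
      ∃ r : Fin 5, r ≠ p ∧ r ≠ q ∧ r ≠ q' ∧ r ≠ z := by
    by_contra h
    push_neg at h
    have hsub : (Finset.univ : Finset (Fin 5)) ⊆ {p, q, q', z} := by
      intro x _
      by_cases h1 : x = p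
      · simp [h1]
      by_cases h2' : x = q
      · simp [h2']
      by_cases h3 : x = q'
      · simp [h3]
      simp [h x h1 h2' h3]
    have hc1 := Finset.card_le_card hsub
    have a1 := Finset.card_insert_le p ({q, q', z} : Finset (Fin 5))
    have a2 := Finset.card_insert_le q ({q', z} : Finset (Fin 5))
    have a3 := Finset.card_insert_le q' ({z} : Finset (Fin 5))
    simp [Finset.card_univ, Finset.card_singleton] at hc1 a1 a2 a3
    omega
  have hpr : p ≠ r := Ne.symm hrp
  have hqr : q ≠ r := Ne.symm hrq
  have hq'r : q' ≠ r := Ne.symm hrq'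
  have hzr : z ≠ r := Ne.symm hrz
  -- coordinate facts
  have hdp : e.repr (m (e p) (e p)) p = 0 := ev_diag m e hcomm hnat hnil p
  have hdq : e.repr (m (e q) (e q)) q = 0 := ev_diag m e hcomm hnat hnil q
  have hdq' : e.repr (m (e q') (e q')) q' = 0 := ev_diag m e hcomm hnat hnil q'
  have hdr : e.repr (m (e r) (e r)) r = 0 := ev_diag m e hcomm hnat hnil r
  have hcqp : e.repr (m (e q) (e q)) p = 0 :=
    ev_no2 m e hcomm hnat h2 hnil hpa hpq hcpq
  have hcq'p : e.repr (m (e q') (e q')) p = 0 :=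
    ev_no2 m e hcomm hnat h2 hnil hpa hpq' hcpq'
  have hcqq' : e.repr (m (e q) (e q)) q' = 0 := by
    by_contra h
    exact hsq'ne (Hrow p q hpq hcpq q' h)
  have hcq'q : e.repr (m (e q') (e q')) q = 0 := by
    by_contra h
    exact hsqne (Hrow p q' hpq' hcpq' q h)
  have hzrep : ∀ k : Fin 5, m (e k) (e k) = 0 → ∀ l, e.repr (m (e k) (e k)) l = 0 := by
    intro k hk l
    rw [hk, map_zero]
    rfl
  -- main case split
  by_cases hsr : m (e r) (e r) = 0
  · -- case R1: decomposable, contradiction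
    exfalso
    apply hindec
    -- vector form of s q
    have hsqvec : m (e q) (e q) = e.repr (m (e q) (e q)) z • e z
        + e.repr (m (e q) (e q)) r • e r := by
      conv_lhs => rw [← e.sum_repr (m (e q) (e q))]
      rw [fin5_sum hpq hpq' hpz hpr hqq' hqz hqr hq'z hq'r hzr]
      rw [hcqp, hdq, hcqq', zero_smul, zero_smul, zero_smul]
      abel
    have hspvec : m (e p) (e p) = e.repr (m (e p) (e p)) q • e q
        + e.repr (m (e p) (e p)) q' • e q'
        + e.repr (m (e p) (e p)) z • e z
        + e.repr (m (e p) (e p)) r • e r := by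
      conv_lhs => rw [← e.sum_repr (m (e p) (e p))]
      rw [fin5_sum hpq hpq' hpz hpr hqq' hqz hqr hq'z hq'r hzr]
      rw [hdp, zero_smul]
      abel
    -- Hv
    have hss := ev_sq_self m e hcomm hnat hnil hpa p
    rw [ev_mul_repr m e hnat,
      fin5_sum hpq hpq' hpz hpr hqq' hqz hqr hq'z hq'r hzr] at hss
    rw [hdp, hszv, hsr] at hss
    simp only [mul_zero, zero_mul, zero_smul, smul_zero, add_zero, zero_add] at hss
    have Hv : (e.repr (m (e p) (e p)) q ^ 2) • m (e q) (e q)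
        + (e.repr (m (e p) (e p)) q' ^ 2) • m (e q') (e q') = 0 := by
      rw [show (e.repr (m (e p) (e p)) q ^ 2) • m (e q) (e q)
          + (e.repr (m (e p) (e p)) q' ^ 2) • m (e q') (e q')
        = (e.repr (m (e p) (e p)) q * e.repr (m (e p) (e p)) q) • m (e q) (e q)
          + (e.repr (m (e p) (e p)) q' * e.repr (m (e p) (e p)) q') • m (e q') (e q')
        from by module]
      exact hss
    by_cases hcqr : e.repr (m (e q) (e q)) r = 0
    · -- n = e r, o = z
      have hcqz0 : e.repr (m (e q) (e q)) z ≠ 0 := hcqz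
      exact caseR1core m e hcomm hnat hpq hpq' hpz hpr hqq' hqz hqr hq'z hq'r hzr
        (b1 := e.repr (m (e p) (e p)) q) (b2 := e.repr (m (e p) (e p)) q')
        (po := e.repr (m (e p) (e p)) z) (pw := e.repr (m (e p) (e p)) r)
        (c := e.repr (m (e q) (e q)) z) (c' := e.repr (m (e q) (e q)) r)
        hcpq hcpq' hcqz0 hspvec hsqvec hszv hsr Hv
    · -- n = e z, o = r
      have hsp2 : m (e p) (e p) = e.repr (m (e p) (e p)) q • e q
          + e.repr (m (e p) (e p)) q' • e q'
          + e.repr (m (e p) (e p)) r • e r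
          + e.repr (m (e p) (e p)) z • e z := by
        conv_lhs => rw [hspvec]
        module
      have hsq2 : m (e q) (e q) = e.repr (m (e q) (e q)) r • e r
          + e.repr (m (e q) (e q)) z • e z := by
        conv_lhs => rw [hsqvec]
        module
      exact caseR1core m e hcomm hnat hpq hpq' hpr hpz hqq' hqr hqz hq'r hq'z
        (Ne.symm hzr)
        (b1 := e.repr (m (e p) (e p)) q) (b2 := e.repr (m (e p) (e p)) q')
        (po := e.repr (m (e p) (e p)) r) (pw := e.repr (m (e p) (e p)) z)
        (c := e.repr (m (e q) (e q)) r) (c' := e.repr (m (e q) (e q)) z)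
        hcpq hcpq' hcqr hsp2 hsq2 hsr hszv Hv
  · -- s r ≠ 0
    have hcqr : e.repr (m (e q) (e q)) r = 0 := by
      by_contra h
      exact hsr (Hrow p q hpq hcpq r h)
    have hcq'r : e.repr (m (e q') (e q')) r = 0 := by
      by_contra h
      exact hsr (Hrow p q' hpq' hcpq' r h)
    have hsqvec : m (e q) (e q) = e.repr (m (e q) (e q)) z • e z := by
      conv_lhs => rw [← e.sum_repr (m (e q) (e q))]
      rw [fin5_sum hpq hpq' hpz hpr hqq' hqz hqr hq'z hq'r hzr]
      rw [hcqp, hdq, hcqq', hcqr, zero_smul, zero_smul, zero_smul, zero_smul]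
      abel
    have hμ1 : e.repr (m (e q) (e q)) z ≠ 0 := hcqz
    have hcq'z : e.repr (m (e q') (e q')) z ≠ 0 := by
      intro h
      apply hsq'ne
      conv_lhs => rw [← e.sum_repr (m (e q') (e q'))]
      rw [fin5_sum hpq hpq' hpz hpr hqq' hqz hqr hq'z hq'r hzr]
      rw [hcq'p, hcq'q, hdq', hcq'r, h]
      simp
    have hsq'vec : m (e q') (e q') = e.repr (m (e q') (e q')) z • e z := by
      conv_lhs => rw [← e.sum_repr (m (e q') (e q'))]
      rw [fin5_sum hpq hpq' hpz hpr hqq' hqz hqr hq'z hq'r hzr]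
      rw [hcq'p, hcq'q, hdq', hcq'r, zero_smul, zero_smul, zero_smul, zero_smul]
      abel
    have hcrp : e.repr (m (e r) (e r)) p = 0 := by
      by_contra h
      exact hsqne (ev_L5 m e hcomm hnat h2 hnil hpa (Ne.symm hpr) hpq
        (Ne.symm hrq) h hcpq)
    -- scalar H1 helper
    have hsSS := ev_sq_self m e hcomm hnat hnil hpa p
    rw [ev_mul_repr m e hnat,
      fin5_sum hpq hpq' hpz hpr hqq' hqz hqr hq'z hq'r hzr] at hsSS
    rw [hdp, hszv] at hsSS
    by_cases hcpr : e.repr (m (e p) (e p)) r = 0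
    · -- case R3
      have hcrq'' : e.repr (m (e r) (e r)) q = e.repr (m (e r) (e r)) q := rfl
      have hsrvec : m (e r) (e r) = e.repr (m (e r) (e r)) q • e q
          + e.repr (m (e r) (e r)) q' • e q'
          + e.repr (m (e r) (e r)) z • e z := by
        conv_lhs => rw [← e.sum_repr (m (e r) (e r))]
        rw [fin5_sum hpq hpq' hpz hpr hqq' hqz hqr hq'z hq'r hzr]
        rw [hcrp, hdr, zero_smul, zero_smul]
        abel
      have hspvec : m (e p) (e p) = e.repr (m (e p) (e p)) q • e q
          + e.repr (m (e p) (e p)) q' • e q'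
          + e.repr (m (e p) (e p)) z • e z := by
        conv_lhs => rw [← e.sum_repr (m (e p) (e p))]
        rw [fin5_sum hpq hpq' hpz hpr hqq' hqz hqr hq'z hq'r hzr]
        rw [hdp, hcpr, zero_smul, zero_smul]
        abel
      -- H1
      rw [hcpr, hsqvec, hsq'vec] at hsSS
      simp only [mul_zero, zero_mul, zero_smul, smul_zero, add_zero, zero_add,
        smul_smul] at hsSS
      have H1 : e.repr (m (e q) (e q)) z * e.repr (m (e p) (e p)) q ^ 2
          + e.repr (m (e q') (e q')) z * e.repr (m (e p) (e p)) q' ^ 2 = 0 := by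
        have hz' : (e.repr (m (e q) (e q)) z * e.repr (m (e p) (e p)) q ^ 2
            + e.repr (m (e q') (e q')) z * e.repr (m (e p) (e p)) q' ^ 2) • e z
            = 0 := by
          rw [← hsSS]; module
        exact (smul_eq_zero.mp hz').resolve_right (e.ne_zero z)
      -- H2 from m (s p) (s r) = 0
      have hkey := (ev_key m e hcomm hnat h2 hnil hpa hpr).1
      rw [ev_mul_repr m e hnat,
        fin5_sum hpq hpq' hpz hpr hqq' hqz hqr hq'z hq'r hzr] at hkey
      rw [hdp, hcrp, hcpr, hszv, hsqvec, hsq'vec] at hkey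
      simp only [mul_zero, zero_mul, zero_smul, smul_zero, add_zero, zero_add,
        smul_smul] at hkey
      have H2 : e.repr (m (e q) (e q)) z * e.repr (m (e p) (e p)) q
            * e.repr (m (e r) (e r)) q
          + e.repr (m (e q') (e q')) z * e.repr (m (e p) (e p)) q'
            * e.repr (m (e r) (e r)) q' = 0 := by
        have hz' : (e.repr (m (e q) (e q)) z * e.repr (m (e p) (e p)) q
              * e.repr (m (e r) (e r)) q
            + e.repr (m (e q') (e q')) z * e.repr (m (e p) (e p)) q'
              * e.repr (m (e r) (e r)) q') • e z = 0 := by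
          rw [← hkey]; module
        exact (smul_eq_zero.mp hz').resolve_right (e.ne_zero z)
      exact caseR3 m e hcomm hnat hpq hpq' hpz hpr hqq' hqz hqr hq'z hq'r hzr
        hcpq hcpq' hμ1 hcq'z hspvec hsqvec hsq'vec hsrvec hszv hsr
        (by linear_combination H1) (by linear_combination H2)
    · -- case R2
      have hcrq : e.repr (m (e r) (e r)) q = 0 := by
        by_contra h
        exact hsqne (ev_L5 m e hcomm hnat h2 hnil hpa hpr
          hrq (Ne.symm hpq) hcpr h)
      have hcrq' : e.repr (m (e r) (e r)) q' = 0 := by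
        by_contra h
        exact hsq'ne (ev_L5 m e hcomm hnat h2 hnil hpa hpr
          hrq' (Ne.symm hpq') hcpr h)
      have hsrvec : m (e r) (e r) = e.repr (m (e r) (e r)) z • e z := by
        conv_lhs => rw [← e.sum_repr (m (e r) (e r))]
        rw [fin5_sum hpq hpq' hpz hpr hqq' hqz hqr hq'z hq'r hzr]
        rw [hcrp, hcrq, hcrq', hdr, zero_smul, zero_smul, zero_smul, zero_smul]
        abel
      have hμ3 : e.repr (m (e r) (e r)) z ≠ 0 := by
        intro h
        apply hsr
        rw [hsrvec, h, zero_smul]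
      have hspvec : m (e p) (e p) = e.repr (m (e p) (e p)) q • e q
          + e.repr (m (e p) (e p)) q' • e q'
          + e.repr (m (e p) (e p)) r • e r
          + e.repr (m (e p) (e p)) z • e z := by
        conv_lhs => rw [← e.sum_repr (m (e p) (e p))]
        rw [fin5_sum hpq hpq' hpz hpr hqq' hqz hqr hq'z hq'r hzr]
        rw [hdp, zero_smul]
        abel
      -- H1
      rw [hsqvec, hsq'vec, hsrvec] at hsSS
      simp only [mul_zero, zero_mul, zero_smul, smul_zero, add_zero, zero_add,
        smul_smul] at hsSS
      have H1 : e.repr (m (e q) (e q)) z * e.repr (m (e p) (e p)) q ^ 2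
          + e.repr (m (e q') (e q')) z * e.repr (m (e p) (e p)) q' ^ 2
          + e.repr (m (e r) (e r)) z * e.repr (m (e p) (e p)) r ^ 2 = 0 := by
        have hz' : (e.repr (m (e q) (e q)) z * e.repr (m (e p) (e p)) q ^ 2
            + e.repr (m (e q') (e q')) z * e.repr (m (e p) (e p)) q' ^ 2
            + e.repr (m (e r) (e r)) z * e.repr (m (e p) (e p)) r ^ 2) • e z
            = 0 := by
          rw [← hsSS]; module
        exact (smul_eq_zero.mp hz').resolve_right (e.ne_zero z)
      exact caseR2 m e hcomm hnat hpq hpq' hpz hpr hqq' hqz hqr hq'z hq'r hzr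
        hcpq hcpq' hcpr hμ1 hcq'z hμ3 hspvec hsqvec hsq'vec hsrvec hszv
        (by linear_combination H1)
end Main


/-- a 5-dimensional nil power-associative evolution algebra over a field of
characteristic ≠ 2, indecomposable and not associative, is isomorphic to one of
`N_{5,10}(α)`, `N_{5,11}(α)`, `N_{5,12}(α,β)`. -/
theorem nil_pa_nonassoc_indecomposable_dim5_classification
    (F : Type*) [Field F] (h2 : (2 : F) ≠ 0)
    (A : Type*) [AddCommGroup A] [Module F A]
    (m : A →ₗ[F] A →ₗ[F] A) (hcomm : ∀ x y : A, m x y = m y x)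
    (e : Module.Basis (Fin 5) F A)
    (hnat : ∀ i j : Fin 5, i ≠ j → m (e i) (e j) = 0)
    (hnil : ∀ a : A, ∃ k : ℕ, ppow m a k = 0)
    (hpa : ∀ (a : A) (i j : ℕ),
      m (ppow m a i) (ppow m a j) = ppow m a (i + j + 1))
    (hnotassoc : ¬ ∀ x y z : A, m (m x y) z = m x (m y z))
    (hindec : ¬ ∃ I J : Submodule F A,
      (∀ x ∈ I, ∀ y : A, m x y ∈ I) ∧ (∀ x ∈ J, ∀ y : A, m x y ∈ J) ∧
      I ≠ ⊥ ∧ J ≠ ⊥ ∧ IsCompl I J) :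
    ∃ v : Module.Basis (Fin 5) F A,
      (∀ i j : Fin 5, i ≠ j → m (v i) (v j) = 0) ∧
      m (v 0) (v 0) = v 1 + v 2 ∧
      m (v 1) (v 1) = v 4 ∧
      m (v 2) (v 2) = -v 4 ∧
      m (v 4) (v 4) = 0 ∧
      ((∃ α : F, α ≠ 0 ∧ m (v 3) (v 3) = α • v 4) ∨
       (∃ α : F, α ≠ 0 ∧ m (v 3) (v 3) = α • (v 1 + v 2)) ∨
       (∃ α β : F, α ≠ 0 ∧ β ≠ 0 ∧
          m (v 3) (v 3) = α • (v 1 + v 2) + β • v 4)) :=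
  nil_pa_nonassoc_indecomposable_dim5_classification' h2 m hcomm e hnat hnil hpa
    hnotassoc hindec
end
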